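/- arXiv:1010.4522 — 4 statements merged into one kernel-verified Lean document; each statement's English description precedes it below -/
import Mathlib

section
/- Let (E,‖·‖) be a random normed module over ℂ with base (Ω,𝓕,P). Define on the set E* of P-a.e. bounded random linear functionals the map ‖f‖* = sup{|f(y)| : y ∈ E, ‖y‖ ≤ 1} (supremum in the complete lattice L⁰₊). Then (E*, ‖·‖*) is itself a random normed module over ℂ with base (Ω,𝓕,P), with module action (ξ·f)(x) = ξ·f(x). -/
open MeasureTheory

noncomputable instance AEEqFun.instCommRing' {α γ : Type*} [MeasurableSpace α] {μ : Measure α}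
    [TopologicalSpace γ] [CommRing γ] [IsTopologicalRing γ] : CommRing (α →ₘ[μ] γ) :=
  { (inferInstance : AddCommGroup (α →ₘ[μ] γ)),
    (inferInstance : CommMonoid (α →ₘ[μ] γ)) with
    left_distrib := fun f g h => by
      apply AEEqFun.ext
      filter_upwards [AEEqFun.coeFn_mul f (g + h), AEEqFun.coeFn_add g h,
        AEEqFun.coeFn_mul f g, AEEqFun.coeFn_mul f h,
        AEEqFun.coeFn_add (f * g) (f * h)] with a h1 h2 h3 h4 h5
      simp only [Pi.mul_apply, Pi.add_apply] at *
      rw [h1, h2, h5, h3, h4, mul_add]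
    right_distrib := fun f g h => by
      apply AEEqFun.ext
      filter_upwards [AEEqFun.coeFn_mul (f + g) h, AEEqFun.coeFn_add f g,
        AEEqFun.coeFn_mul f h, AEEqFun.coeFn_mul g h,
        AEEqFun.coeFn_add (f * h) (g * h)] with a h1 h2 h3 h4 h5
      simp only [Pi.mul_apply, Pi.add_apply] at *
      rw [h1, h2, h5, h3, h4, add_mul]
    zero_mul := fun f => by
      apply AEEqFun.ext
      filter_upwards [AEEqFun.coeFn_mul 0 f, AEEqFun.coeFn_zero (α := α) (μ := μ) (β := γ)]
        with a h1 h2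
      simp only [Pi.mul_apply] at *
      rw [h1, h2]
      simp
    mul_zero := fun f => by
      apply AEEqFun.ext
      filter_upwards [AEEqFun.coeFn_mul f 0, AEEqFun.coeFn_zero (α := α) (μ := μ) (β := γ)]
        with a h1 h2
      simp only [Pi.mul_apply] at *
      rw [h1, h2]
      simp }

namespace RNM

variable {Ω : Type} [MeasurableSpace Ω] {P : Measure Ω}

/-- the pointwise absolute value `L⁰(𝓕,ℂ) → L⁰(𝓕,ℝ)`. -/
noncomputable def L0abs (ξ : Ω →ₘ[P] ℂ) : Ω →ₘ[P] ℝ :=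
  ξ.comp (fun z => ‖z‖) continuous_norm

/-- the canonical embedding `L⁰(𝓕,ℝ) → L⁰(𝓕,ℂ)`. -/
noncomputable def ofRealC (ξ : Ω →ₘ[P] ℝ) : Ω →ₘ[P] ℂ :=
  ξ.comp Complex.ofReal Complex.continuous_ofReal

/-- pointwise complex conjugation on `L⁰(𝓕,ℂ)`. -/
noncomputable def conjC (ξ : Ω →ₘ[P] ℂ) : Ω →ₘ[P] ℂ :=
  ξ.comp (fun z => starRingEnd ℂ z) Complex.continuous_conj

/-- `ξ ∈ L⁰₊₊`, i.e. `ξ > 0` a.e. on `Ω`. -/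
def L0pos (ξ : Ω →ₘ[P] ℝ) : Prop := ∀ᵐ ω ∂P, 0 < ξ ω

/-- `ξ < η` (a.e.) on the whole of `Ω`. -/
def ltAE (ξ η : Ω →ₘ[P] ℝ) : Prop := ∀ᵐ ω ∂P, ξ ω < η ω

/-- the equivalence class `Ĩ_A ∈ L⁰(𝓕,ℂ)` of the indicator of a measurable set `A`. -/
noncomputable def indC (A : Set Ω) (hA : MeasurableSet A) : Ω →ₘ[P] ℂ :=
  AEEqFun.mk (A.indicator fun _ => (1 : ℂ)) (aestronglyMeasurable_const.indicator hA)

/-- the equivalence class `Ĩ_A ∈ L⁰(𝓕,ℝ)` of the indicator of a measurable set `A`. -/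
noncomputable def indR (A : Set Ω) (hA : MeasurableSet A) : Ω →ₘ[P] ℝ :=
  AEEqFun.mk (A.indicator fun _ => (1 : ℝ)) (aestronglyMeasurable_const.indicator hA)

section AELemmas

lemma L0abs_ae (ξ : Ω →ₘ[P] ℂ) : ∀ᵐ ω ∂P, (L0abs ξ) ω = ‖ξ ω‖ :=
  AEEqFun.coeFn_comp _ _ ξ

lemma le_ae {ξ η : Ω →ₘ[P] ℝ} (h : ξ ≤ η) : ∀ᵐ ω ∂P, ξ ω ≤ η ω :=
  AEEqFun.coeFn_le.2 h

lemma le_of_ae {ξ η : Ω →ₘ[P] ℝ} (h : ∀ᵐ ω ∂P, ξ ω ≤ η ω) : ξ ≤ η :=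
  AEEqFun.coeFn_le.1 h

lemma mul_ae {γ : Type*} [TopologicalSpace γ] [CommRing γ] [IsTopologicalRing γ]
    (ξ η : Ω →ₘ[P] γ) : ∀ᵐ ω ∂P, (ξ * η) ω = ξ ω * η ω :=
  AEEqFun.coeFn_mul ξ η

lemma add_ae {γ : Type*} [TopologicalSpace γ] [AddGroup γ] [IsTopologicalAddGroup γ]
    (ξ η : Ω →ₘ[P] γ) : ∀ᵐ ω ∂P, (ξ + η) ω = ξ ω + η ω :=
  AEEqFun.coeFn_add ξ η

lemma sub_ae {γ : Type*} [TopologicalSpace γ] [AddGroup γ] [IsTopologicalAddGroup γ]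
    (ξ η : Ω →ₘ[P] γ) : ∀ᵐ ω ∂P, (ξ - η) ω = ξ ω - η ω :=
  AEEqFun.coeFn_sub ξ η

lemma zero_ae (γ : Type*) [TopologicalSpace γ] [Zero γ] :
    ∀ᵐ ω ∂P, (0 : Ω →ₘ[P] γ) ω = 0 :=
  AEEqFun.coeFn_zero

lemma one_ae (γ : Type*) [TopologicalSpace γ] [One γ] :
    ∀ᵐ ω ∂P, (1 : Ω →ₘ[P] γ) ω = 1 :=
  AEEqFun.coeFn_one

end AELemmas

/-- a countable measurable partition of `Ω`. -/
structure IsMPartition (A : ℕ → Set Ω) : Prop where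
  meas : ∀ n, MeasurableSet (A n)
  disj : Pairwise (Function.onFun Disjoint A)
  cover : (⋃ n, A n) = Set.univ

section Module

variable {E : Type*} [AddCommGroup E] [Module (Ω →ₘ[P] ℂ) E]

variable (P E) in
/-- `E` has the countable concatenation property. -/
def HasCCP : Prop :=
  ∀ (A : ℕ → Set Ω) (hA : IsMPartition A) (x : ℕ → E),
    ∃ x0 : E, ∀ n, indC (P := P) (A n) (hA.meas n) • x0 = indC (P := P) (A n) (hA.meas n) • x n

/-- a subset `S` of `E` has the countable concatenation property. -/
def SetCCP (S : Set E) : Prop :=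
  ∀ (A : ℕ → Set Ω) (hA : IsMPartition A) (x : ℕ → E), (∀ n, x n ∈ S) →
    ∃ x0 ∈ S, ∀ n, indC (P := P) (A n) (hA.meas n) • x0 = indC (P := P) (A n) (hA.meas n) • x n

/-- the countable concatenation hull `H_cc(S)` of a subset `S` of `E`. -/
def Hcc (S : Set E) : Set E :=
  {x | ∃ (A : ℕ → Set Ω) (hA : IsMPartition A) (m : ℕ → E), (∀ n, m n ∈ S) ∧
    ∀ n, indC (P := P) (A n) (hA.meas n) • x = indC (P := P) (A n) (hA.meas n) • m n}

/-- `L⁰`-convexity of a subset of an `L⁰(𝓕,ℂ)`-module. -/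
def L0Convex (S : Set E) : Prop :=
  ∀ x ∈ S, ∀ y ∈ S, ∀ ξ : Ω →ₘ[P] ℝ, 0 ≤ ξ → ξ ≤ 1 →
    ofRealC ξ • x + ofRealC (1 - ξ) • y ∈ S

/-- the random-norm axioms for `nrm : E → L⁰₊`, making `(E, nrm)` an `RN` module over `ℂ`. -/
structure IsRNNorm (nrm : E → (Ω →ₘ[P] ℝ)) : Prop where
  nonneg : ∀ x, 0 ≤ nrm x
  eq_zero_iff : ∀ x, nrm x = 0 ↔ x = 0
  smul_eq : ∀ (ξ : Ω →ₘ[P] ℂ) (x : E), nrm (ξ • x) = L0abs ξ * nrm x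
  add_le : ∀ x y, nrm (x + y) ≤ nrm x + nrm y

/-- the submodule of `P`-a.e. bounded random linear functionals on `(E, nrm)`:
the random conjugate space `E*`. -/
noncomputable def rdual (nrm : E → (Ω →ₘ[P] ℝ)) :
    Submodule (Ω →ₘ[P] ℂ) (E →ₗ[Ω →ₘ[P] ℂ] (Ω →ₘ[P] ℂ)) where
  carrier := {f | ∃ ξ : Ω →ₘ[P] ℝ, 0 ≤ ξ ∧ ∀ x, L0abs (f x) ≤ ξ * nrm x}
  zero_mem' := by
    refine ⟨0, le_refl 0, fun x => ?_⟩
    apply le_of_ae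
    have e0 : ((0 : E →ₗ[Ω →ₘ[P] ℂ] (Ω →ₘ[P] ℂ)) x) = (0 : Ω →ₘ[P] ℂ) := rfl
    filter_upwards [L0abs_ae ((0 : E →ₗ[Ω →ₘ[P] ℂ] (Ω →ₘ[P] ℂ)) x),
      mul_ae (0 : Ω →ₘ[P] ℝ) (nrm x), zero_ae ℝ, zero_ae ℂ] with ω h1 h2 h3 h4
    rw [h1, h2, h3, e0, h4]
    simp
  add_mem' := by
    rintro f g ⟨ξ, hξ0, hξ⟩ ⟨η, hη0, hη⟩
    have hsum : (0 : Ω →ₘ[P] ℝ) ≤ ξ + η := by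
      apply le_of_ae
      filter_upwards [le_ae hξ0, le_ae hη0, add_ae ξ η, zero_ae ℝ] with ω h1 h2 h3 h4
      rw [h3, h4]
      rw [h4] at h1 h2
      linarith
    refine ⟨ξ + η, hsum, fun x => ?_⟩
    apply le_of_ae
    have e1 : ((f + g) x) = f x + g x := rfl
    filter_upwards [L0abs_ae ((f + g) x), add_ae (f x) (g x),
      mul_ae (ξ + η) (nrm x), add_ae ξ η, mul_ae ξ (nrm x), mul_ae η (nrm x),
      le_ae (hξ x), le_ae (hη x), L0abs_ae (f x), L0abs_ae (g x)]
      with ω h1 h2 h3 h4 h5 h6 h7 h8 h9 h10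
    rw [h1, h3, h4, e1, h2]
    rw [h9, h5] at h7
    rw [h10, h6] at h8
    calc ‖f x ω + g x ω‖ ≤ ‖f x ω‖ + ‖g x ω‖ :=
          norm_add_le _ _
      _ ≤ ξ ω * nrm x ω + η ω * nrm x ω := add_le_add h7 h8
      _ = (ξ ω + η ω) * nrm x ω := by ring
  smul_mem' := by
    rintro c f ⟨ξ, hξ0, hξ⟩
    have hpos : (0 : Ω →ₘ[P] ℝ) ≤ L0abs c * ξ := by
      apply le_of_ae
      filter_upwards [mul_ae (L0abs c) ξ, L0abs_ae c, le_ae hξ0, zero_ae ℝ]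
        with ω h1 h2 h3 h4
      rw [h1, h2, h4]
      rw [h4] at h3
      positivity
    refine ⟨L0abs c * ξ, hpos, fun x => ?_⟩
    apply le_of_ae
    have e1 : ((c • f) x) = c * f x := rfl
    filter_upwards [L0abs_ae ((c • f) x), mul_ae c (f x),
      mul_ae (L0abs c * ξ) (nrm x), mul_ae (L0abs c) ξ, L0abs_ae c,
      le_ae (hξ x), L0abs_ae (f x), mul_ae ξ (nrm x)] with ω h1 h2 h3 h4 h5 h6 h7 h8
    rw [h1, h3, h4, h5, e1, h2]
    rw [h7, h8] at h6
    have h0 : (0:ℝ) ≤ ‖c ω‖ := norm_nonneg _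
    calc ‖c ω * f x ω‖ = ‖c ω‖ * ‖f x ω‖ := norm_mul _ _
      _ ≤ ‖c ω‖ * (ξ ω * nrm x ω) := mul_le_mul_of_nonneg_left h6 h0
      _ = ‖c ω‖ * ξ ω * nrm x ω := by ring

/-- the conjugate random norm `‖f‖* = ⋁{|f(y)| : ‖y‖ ≤ 1}` (the lattice supremum, when
it exists). -/
noncomputable def dnorm (nrm : E → (Ω →ₘ[P] ℝ))
    (f : E →ₗ[Ω →ₘ[P] ℂ] (Ω →ₘ[P] ℂ)) : Ω →ₘ[P] ℝ := by
  classical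
  exact if h : ∃ s : Ω →ₘ[P] ℝ, IsLUB {a | ∃ y : E, nrm y ≤ 1 ∧ a = L0abs (f y)} s
    then h.choose else 0

/-- the random natural embedding of `E` into functionals on its random conjugate space. -/
noncomputable def Jmap (nrm : E → (Ω →ₘ[P] ℝ)) (x : E) :
    (↥(rdual nrm)) →ₗ[Ω →ₘ[P] ℂ] (Ω →ₘ[P] ℂ) where
  toFun f := f.1 x
  map_add' f g := rfl
  map_smul' c f := rfl

end Module

section Topologies

/-- a topology built from a directed family of "balls". -/
def ballTop {X ι : Type*} [Nonempty ι] (ball : X → ι → Set X)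
    (dir : ∀ x i j, ∃ k, ball x k ⊆ ball x i ∩ ball x j) : TopologicalSpace X where
  IsOpen B := ∀ x ∈ B, ∃ i, ball x i ⊆ B
  isOpen_univ := fun x _ => ⟨Classical.arbitrary ι, fun _ _ => trivial⟩
  isOpen_inter := fun B C hB hC x hx => by
    obtain ⟨i, hi⟩ := hB x hx.1
    obtain ⟨j, hj⟩ := hC x hx.2
    obtain ⟨k, hk⟩ := dir x i j
    exact ⟨k, fun y hy => ⟨hi (hk hy).1, hj (hk hy).2⟩⟩
  isOpen_sUnion := fun S hS x hx => by
    obtain ⟨B, hB, hxB⟩ := hx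
    obtain ⟨i, hi⟩ := hS B hB x hxB
    exact ⟨i, fun y hy => ⟨B, hB, hi hy⟩⟩

instance L0posNonempty : Nonempty {ε : Ω →ₘ[P] ℝ // L0pos ε} := by
  refine ⟨⟨1, ?_⟩⟩
  filter_upwards [one_ae (P := P) ℝ] with ω h
  rw [h]; exact one_pos

instance : Nonempty {e : ℝ // 0 < e} := ⟨⟨1, one_pos⟩⟩

instance : Nonempty {l : ℝ // 0 < l ∧ l < 1} := ⟨⟨1/2, by norm_num⟩⟩

lemma L0pos_inf {ε δ : Ω →ₘ[P] ℝ} (hε : L0pos ε) (hδ : L0pos δ) : L0pos (ε ⊓ δ) := by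
  filter_upwards [hε, hδ, AEEqFun.coeFn_inf ε δ] with ω h1 h2 h3
  rw [h3]; exact lt_inf_iff.2 ⟨h1, h2⟩

lemma ltAE_inf {a ε δ : Ω →ₘ[P] ℝ} (h : ltAE a (ε ⊓ δ)) : ltAE a ε ∧ ltAE a δ := by
  constructor
  · filter_upwards [h, AEEqFun.coeFn_inf ε δ] with ω h1 h2
    rw [h2] at h1; exact h1.trans_le inf_le_left
  · filter_upwards [h, AEEqFun.coeFn_inf ε δ] with ω h1 h2
    rw [h2] at h1; exact h1.trans_le inf_le_right

variable {E : Type*} [AddCommGroup E] [Module (Ω →ₘ[P] ℂ) E]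

/-- the locally `L⁰`-convex topology `𝓣_c` on an `RN` module `(E, nrm)`. -/
noncomputable def TcTop (nrm : E → (Ω →ₘ[P] ℝ)) : TopologicalSpace E :=
  ballTop (ι := {ε : Ω →ₘ[P] ℝ // L0pos ε})
    (fun x ε => {y | ltAE (nrm (y - x)) ε.1})
    (by
      rintro x ⟨ε, hε⟩ ⟨δ, hδ⟩
      exact ⟨⟨ε ⊓ δ, L0pos_inf hε hδ⟩, fun y hy => ⟨(ltAE_inf hy).1, (ltAE_inf hy).2⟩⟩)

/-- the `(ε,λ)`-topology `𝓣_{ε,λ}` on an `RN` module `(E, nrm)`. -/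
noncomputable def TelTop (nrm : E → (Ω →ₘ[P] ℝ)) : TopologicalSpace E :=
  ballTop (ι := {e : ℝ // 0 < e} × {l : ℝ // 0 < l ∧ l < 1})
    (fun x i => {y | ENNReal.ofReal (1 - i.2.1) < P {ω | nrm (y - x) ω < i.1.1}})
    (by
      rintro x ⟨⟨e₁, he₁⟩, ⟨l₁, hl₁⟩⟩ ⟨⟨e₂, he₂⟩, ⟨l₂, hl₂⟩⟩
      refine ⟨⟨⟨min e₁ e₂, lt_min he₁ he₂⟩,
        ⟨min l₁ l₂, lt_min hl₁.1 hl₂.1, lt_of_le_of_lt (min_le_left _ _) hl₁.2⟩⟩,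
        fun y hy => ⟨?_, ?_⟩⟩ <;> simp only [Set.mem_setOf_eq] at hy ⊢
      · refine lt_of_le_of_lt (ENNReal.ofReal_le_ofReal (by
          have := min_le_left l₁ l₂; linarith)) (hy.trans_le (measure_mono fun ω hω =>
          show nrm (y - x) ω < e₁ from lt_of_lt_of_le hω (min_le_left _ _)))
      · refine lt_of_le_of_lt (ENNReal.ofReal_le_ofReal (by
          have := min_le_right l₁ l₂; linarith)) (hy.trans_le (measure_mono fun ω hω =>
          show nrm (y - x) ω < e₂ from lt_of_lt_of_le hω (min_le_right _ _))))

variable (P) in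
/-- the locally `L⁰`-convex weak star topology `σ_c` on the space of random linear
functionals on a module `M`, induced by the pairing with `M`. -/
noncomputable def sigmaCTop (M : Type*) [AddCommGroup M] [Module (Ω →ₘ[P] ℂ) M] :
    TopologicalSpace (M →ₗ[Ω →ₘ[P] ℂ] (Ω →ₘ[P] ℂ)) :=
  ballTop (ι := Finset M × {ε : Ω →ₘ[P] ℝ // L0pos ε})
    (fun g i => {h | ∀ x ∈ i.1, ltAE (L0abs (h x - g x)) i.2.1})
    (by
      classical
      rintro g ⟨s, ε, hε⟩ ⟨t, δ, hδ⟩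
      refine ⟨⟨s ∪ t, ⟨ε ⊓ δ, L0pos_inf hε hδ⟩⟩, fun h hh => ⟨?_, ?_⟩⟩
      · exact fun x hx => (ltAE_inf (hh x (Finset.mem_union_left t hx))).1
      · exact fun x hx => (ltAE_inf (hh x (Finset.mem_union_right s hx))).2)

variable (P) in
/-- the `(ε,λ)` weak star topology `σ_{(ε,λ)}` on the space of random linear functionals
on a module `M`, induced by the pairing with `M`. -/
noncomputable def sigmaElTop (M : Type*) [AddCommGroup M] [Module (Ω →ₘ[P] ℂ) M] :
    TopologicalSpace (M →ₗ[Ω →ₘ[P] ℂ] (Ω →ₘ[P] ℂ)) :=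
  ballTop (ι := Finset M × {e : ℝ // 0 < e} × {l : ℝ // 0 < l ∧ l < 1})
    (fun g i => {h | ∀ x ∈ i.1,
      ENNReal.ofReal (1 - i.2.2.1) < P {ω | (L0abs (h x - g x)) ω < i.2.1.1}})
    (by
      classical
      rintro g ⟨s, ⟨e₁, he₁⟩, ⟨l₁, hl₁⟩⟩ ⟨t, ⟨e₂, he₂⟩, ⟨l₂, hl₂⟩⟩
      refine ⟨⟨s ∪ t, ⟨min e₁ e₂, lt_min he₁ he₂⟩,
        ⟨min l₁ l₂, lt_min hl₁.1 hl₂.1, lt_of_le_of_lt (min_le_left _ _) hl₁.2⟩⟩,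
        fun h hh => ⟨fun x hx => ?_, fun x hx => ?_⟩⟩
      · refine lt_of_le_of_lt (ENNReal.ofReal_le_ofReal (by
          have := min_le_left l₁ l₂; linarith))
          ((hh x (Finset.mem_union_left t hx)).trans_le (measure_mono fun ω hω =>
            show (L0abs (h x - g x)) ω < e₁ from lt_of_lt_of_le hω (min_le_left _ _)))
      · refine lt_of_le_of_lt (ENNReal.ofReal_le_ofReal (by
          have := min_le_right l₁ l₂; linarith))
          ((hh x (Finset.mem_union_right s hx)).trans_le (measure_mono fun ω hω =>
            show (L0abs (h x - g x)) ω < e₂ from lt_of_lt_of_le hω (min_le_right _ _))))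

end Topologies

end RNM


section MyHelpers
open MeasureTheory RNM

variable {Ω : Type} [MeasurableSpace Ω] {P : Measure Ω}
  {E : Type*} [AddCommGroup E] [Module (Ω →ₘ[P] ℂ) E]

lemma RNM.zero_mem_dset (nrm : E → Ω →ₘ[P] ℝ) (hnrm : IsRNNorm nrm)
    (f : E →ₗ[Ω →ₘ[P] ℂ] (Ω →ₘ[P] ℂ)) :
    (0 : Ω →ₘ[P] ℝ) ∈ {a | ∃ y : E, nrm y ≤ 1 ∧ a = L0abs (f y)} := by
  refine ⟨0, ?_, ?_⟩
  · rw [(hnrm.eq_zero_iff 0).2 rfl]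
    apply le_of_ae
    filter_upwards [zero_ae (P := P) ℝ, one_ae (P := P) ℝ] with ω h0 h1
    rw [h0, h1]; norm_num
  · rw [map_zero]
    apply AEEqFun.ext
    filter_upwards [L0abs_ae (0 : Ω →ₘ[P] ℂ), zero_ae (P := P) ℂ, zero_ae (P := P) ℝ]
      with ω h1 h2 h3
    rw [h3, h1, h2]; simp

end MyHelpers

open MeasureTheory RNM in
/-- The random conjugate space `E*` of an `RN` module `(E, nrm)`, equipped with
`‖f‖* = ⋁{|f y| : ‖y‖ ≤ 1}`, is itself an `RN` module over `ℂ` with base `(Ω,𝓕,P)`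
(the closure of `E*` under the module operations is `rdual nrm` being a submodule). -/
theorem rdual_is_RN_module {Ω : Type} [MeasurableSpace Ω] {P : Measure Ω}
    [IsProbabilityMeasure P] {E : Type*} [AddCommGroup E] [Module (Ω →ₘ[P] ℂ) E]
    (nrm : E → Ω →ₘ[P] ℝ) (hnrm : IsRNNorm nrm)
    (N : (E →ₗ[Ω →ₘ[P] ℂ] (Ω →ₘ[P] ℂ)) → Ω →ₘ[P] ℝ)
    (hN : ∀ f ∈ rdual nrm, IsLUB {a | ∃ y : E, nrm y ≤ 1 ∧ a = L0abs (f y)} (N f)) :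
    (∀ f ∈ rdual nrm, 0 ≤ N f) ∧
    (∀ f ∈ rdual nrm, (N f = 0 ↔ f = 0)) ∧
    (∀ (ξ : Ω →ₘ[P] ℂ) (f : E →ₗ[Ω →ₘ[P] ℂ] (Ω →ₘ[P] ℂ)), f ∈ rdual nrm →
      N (ξ • f) = L0abs ξ * N f) ∧
    (∀ f ∈ rdual nrm, ∀ g ∈ rdual nrm, N (f + g) ≤ N f + N g) := by
  refine ⟨?_, ?_, ?_, ?_⟩
  · -- nonnegativity
    intro f hf
    exact (hN f hf).1 (zero_mem_dset nrm hnrm f)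
  · -- N f = 0 ↔ f = 0
    intro f hf
    constructor
    · intro hNf0
      apply LinearMap.ext
      intro x
      -- build a scaled unit vector
      set n := nrm x with hn
      have hmeas : AEStronglyMeasurable (fun ω => (1 + max (n ω) 0)⁻¹) P :=
        ((aemeasurable_const.add
          (n.aestronglyMeasurable.aemeasurable.max aemeasurable_const)).inv).aestronglyMeasurable
      set d : Ω →ₘ[P] ℝ := AEEqFun.mk _ hmeas with hd
      have hd_ae : ∀ᵐ ω ∂P, d ω = (1 + max (n ω) 0)⁻¹ := AEEqFun.coeFn_mk _ hmeas
      have hod_ae : ∀ᵐ ω ∂P, (ofRealC d) ω = (d ω : ℂ) := AEEqFun.coeFn_comp _ _ d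
      set y : E := ofRealC d • x with hy
      have hny : nrm y ≤ 1 := by
        rw [hy, hnrm.smul_eq]
        apply le_of_ae
        filter_upwards [mul_ae (L0abs (ofRealC d)) n, L0abs_ae (ofRealC d), hod_ae, hd_ae,
          one_ae (P := P) ℝ, le_ae (hnrm.nonneg x), zero_ae (P := P) ℝ]
          with ω h1 h2 h3 h4 h5 h6 h7
        rw [h1, h2, h3, h4, h5]
        rw [h7] at h6
        have hmax : max (n ω) 0 = n ω := max_eq_left h6
        have hpos : (0:ℝ) < 1 + n ω := by linarith
        rw [Complex.norm_real, Real.norm_eq_abs, hmax, abs_of_nonneg (by positivity)]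
        rw [inv_mul_le_iff₀ hpos]
        linarith
      have hmem : L0abs (f y) ≤ N f := (hN f hf).1 ⟨y, hny, rfl⟩
      rw [hNf0] at hmem
      have hfy : f y = ofRealC d * f x := by
        rw [hy, _root_.map_smul, smul_eq_mul]
      apply AEEqFun.ext
      filter_upwards [le_ae hmem, L0abs_ae (f y), hfy ▸ mul_ae (ofRealC d) (f x), hod_ae,
        hd_ae, zero_ae (P := P) ℂ, zero_ae (P := P) ℝ] with ω h1 h2 h3 h4 h5 h6 h7
      rw [h2, h3, h4, h5] at h1
      rw [h7] at h1
      rw [norm_mul, Complex.norm_real, Real.norm_eq_abs] at h1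
      have hpos : (0:ℝ) < (1 + max (n ω) 0)⁻¹ := by positivity
      rw [abs_of_nonneg hpos.le] at h1
      have : ‖f x ω‖ ≤ 0 := by
        nlinarith [norm_nonneg (f x ω)]
      rw [LinearMap.zero_apply, h6]
      exact norm_eq_zero.1 (le_antisymm this (norm_nonneg _))
    · rintro rfl
      refine (hN 0 (Submodule.zero_mem _)).unique ⟨?_, ?_⟩
      · rintro a ⟨y, hy, rfl⟩
        rw [LinearMap.zero_apply]
        apply le_of_ae
        filter_upwards [L0abs_ae (0 : Ω →ₘ[P] ℂ), zero_ae (P := P) ℂ, zero_ae (P := P) ℝ]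
          with ω h1 h2 h3
        rw [h1, h2, h3]; simp
      · intro b hb
        exact hb (zero_mem_dset nrm hnrm 0)
  · -- homogeneity
    intro ξ f hf
    have hmemξf : ξ • f ∈ rdual nrm := Submodule.smul_mem _ ξ hf
    refine (hN (ξ • f) hmemξf).unique ⟨?_, ?_⟩
    · -- |ξ| * N f is an upper bound
      rintro a ⟨y, hy, rfl⟩
      have h1 : L0abs (f y) ≤ N f := (hN f hf).1 ⟨y, hy, rfl⟩
      have e1 : (ξ • f) y = ξ * f y := rfl
      apply le_of_ae
      filter_upwards [L0abs_ae ((ξ • f) y), e1 ▸ mul_ae ξ (f y),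
        mul_ae (L0abs ξ) (N f), L0abs_ae ξ, le_ae h1, L0abs_ae (f y)]
        with ω h2 h3 h4 h5 h6 h7
      rw [h2, h3, h4, h5, norm_mul]
      rw [h7] at h6
      exact mul_le_mul_of_nonneg_left h6 (norm_nonneg _)
    · -- |ξ| * N f is the least upper bound
      intro b hb
      have hb0 : (0 : Ω →ₘ[P] ℝ) ≤ b := hb (zero_mem_dset nrm hnrm (ξ • f))
      -- pointwise inverse of |ξ|
      have hmeas : AEStronglyMeasurable (fun ω => ((L0abs ξ) ω)⁻¹) P :=
        ((L0abs ξ).aestronglyMeasurable.aemeasurable.inv).aestronglyMeasurable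
      set η : Ω →ₘ[P] ℝ := AEEqFun.mk _ hmeas with hη
      have hη_ae : ∀ᵐ ω ∂P, η ω = ((L0abs ξ) ω)⁻¹ := AEEqFun.coeFn_mk _ hmeas
      set b' : Ω →ₘ[P] ℝ := η * b + (1 - L0abs ξ * η) * N f with hb'
      have hub : N f ≤ b' := by
        apply (hN f hf).2
        rintro a ⟨y, hy, rfl⟩
        have h1 : L0abs (f y) ≤ N f := (hN f hf).1 ⟨y, hy, rfl⟩
        have h2 : L0abs ((ξ • f) y) ≤ b := hb ⟨y, hy, rfl⟩
        have e1 : (ξ • f) y = ξ * f y := rfl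
        apply le_of_ae
        filter_upwards [le_ae h1, le_ae h2, L0abs_ae (f y), L0abs_ae ((ξ • f) y),
          e1 ▸ mul_ae ξ (f y), L0abs_ae ξ, hη_ae,
          add_ae (η * b) ((1 - L0abs ξ * η) * N f), mul_ae η b,
          mul_ae (1 - L0abs ξ * η) (N f), sub_ae (1 : Ω →ₘ[P] ℝ) (L0abs ξ * η),
          one_ae (P := P) ℝ, mul_ae (L0abs ξ) η]
          with ω k1 k2 k3 k4 k5 k6 k7 k8 k9 k10 k11 k12 k13
        simp only [hb', k3, k8, k9, k10, k11, k12, k13, k7, k6]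
        rw [k3] at k1
        rw [k4, k5, norm_mul] at k2
        rcases eq_or_ne (‖ξ ω‖) 0 with h0 | h0
        · rw [h0]
          simp only [inv_zero, mul_zero, zero_mul, sub_zero, one_mul, zero_add]
          exact k1
        · rw [mul_inv_cancel₀ h0]
          simp only [sub_self, zero_mul, add_zero]
          have h3 := mul_le_mul_of_nonneg_left k2
            (inv_nonneg.2 (norm_nonneg (ξ ω)))
          rw [← mul_assoc, inv_mul_cancel₀ h0, one_mul] at h3
          exact h3
      apply le_of_ae
      filter_upwards [le_ae hub, le_ae hb0, mul_ae (L0abs ξ) (N f), L0abs_ae ξ,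
        add_ae (η * b) ((1 - L0abs ξ * η) * N f), mul_ae η b,
        mul_ae (1 - L0abs ξ * η) (N f), sub_ae (1 : Ω →ₘ[P] ℝ) (L0abs ξ * η),
        one_ae (P := P) ℝ, mul_ae (L0abs ξ) η, hη_ae, zero_ae (P := P) ℝ]
        with ω k1 k2 k3 k4 k5 k6 k7 k8 k9 k10 k11 k12
      rw [k3, k4]
      simp only [hb', k5, k6, k7, k8, k9, k10, k11, k4] at k1
      rw [k12] at k2
      rcases eq_or_ne (‖ξ ω‖) 0 with h0 | h0
      · rw [h0, zero_mul]; exact k2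
      · rw [mul_inv_cancel₀ h0] at k1
        simp only [sub_self, zero_mul, add_zero] at k1
        have h3 := mul_le_mul_of_nonneg_left k1 (norm_nonneg (ξ ω))
        rw [← mul_assoc, mul_inv_cancel₀ h0, one_mul] at h3
        exact h3
  · -- triangle inequality
    intro f hf g hg
    apply (hN (f + g) (Submodule.add_mem _ hf hg)).2
    rintro a ⟨y, hy, rfl⟩
    have h1 : L0abs (f y) ≤ N f := (hN f hf).1 ⟨y, hy, rfl⟩
    have h2 : L0abs (g y) ≤ N g := (hN g hg).1 ⟨y, hy, rfl⟩
    have e1 : (f + g) y = f y + g y := rfl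
    apply le_of_ae
    filter_upwards [le_ae h1, le_ae h2, L0abs_ae ((f + g) y), e1 ▸ add_ae (f y) (g y),
      L0abs_ae (f y), L0abs_ae (g y), add_ae (N f) (N g)] with ω k1 k2 k3 k4 k5 k6 k7
    rw [k3, k4, k7]
    rw [k5] at k1
    rw [k6] at k2
    calc ‖f y ω + g y ω‖ ≤ ‖f y ω‖ + ‖g y ω‖ :=
          norm_add_le _ _
      _ ≤ N f ω + N g ω := add_le_add k1 k2
end

section
/- Let E be a left module over L⁰(𝓕,ℂ) and suppose every countable concatenation of elements of E along a countable measurable partition of Ω is well defined in E (E has the countable concatenation property). Then the countable concatenation hull H_cc(M) of any subset M of E has the countable concatenation property. -/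
open MeasureTheory

open MeasureTheory RNM in
lemma indC_inter_eq {Ω : Type} [MeasurableSpace Ω] {P : Measure Ω}
    {A B : Set Ω} (hA : MeasurableSet A) (hB : MeasurableSet B) :
    indC (P := P) (A ∩ B) (hA.inter hB) = indC (P := P) A hA * indC (P := P) B hB := by
  unfold indC
  rw [AEEqFun.mk_mul_mk]
  congr 1
  ext ω
  by_cases h1 : ω ∈ A <;> by_cases h2 : ω ∈ B <;>
    simp [Set.indicator_apply, h1, h2]

open MeasureTheory RNM in
/-- If a left `L⁰(𝓕,ℂ)`-module `E` has the countable concatenation property, then the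
countable concatenation hull `H_cc(M)` of any subset `M ⊆ E` has the countable
concatenation property. -/
theorem Hcc_hasCCP {Ω : Type} [MeasurableSpace Ω] {P : Measure Ω}
    [IsProbabilityMeasure P] {E : Type*} [AddCommGroup E] [Module (Ω →ₘ[P] ℂ) E]
    (hE : HasCCP P E) (M : Set E) : SetCCP (P := P) (Hcc (P := P) M) := by
  intro A hA x hx
  choose B hB m hmM hmx using hx
  obtain ⟨x0, hx0⟩ := hE A hA x
  let e : ℕ ≃ ℕ × ℕ := (Denumerable.eqv (ℕ × ℕ)).symm
  have hCmeas : ∀ j, MeasurableSet (A (e j).1 ∩ B (e j).1 (e j).2) :=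
    fun j => (hA.meas _).inter ((hB _).meas _)
  have hC : IsMPartition (fun j => A (e j).1 ∩ B (e j).1 (e j).2) := by
    constructor
    · exact hCmeas
    · intro i j hij
      rcases eq_or_ne (e i).1 (e j).1 with h1 | h1
      · have h2 : (e i).2 ≠ (e j).2 := fun h2 => hij (e.injective (Prod.ext h1 h2))
        have := ((hB (e j).1).disj h2)
        simp only [Function.onFun]
        rw [h1]
        exact this.mono Set.inter_subset_right Set.inter_subset_right
      · exact (hA.disj h1).mono Set.inter_subset_left Set.inter_subset_left
    · ext ω
      simp only [Set.mem_iUnion, Set.mem_univ, iff_true, Set.mem_inter_iff]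
      have h1 : ω ∈ ⋃ n, A n := hA.cover ▸ Set.mem_univ ω
      obtain ⟨n, hn⟩ := Set.mem_iUnion.1 h1
      have h2 : ω ∈ ⋃ k, B n k := (hB n).cover ▸ Set.mem_univ ω
      obtain ⟨k, hk⟩ := Set.mem_iUnion.1 h2
      exact ⟨e.symm (n, k), by simp [hn, hk]⟩
  refine ⟨x0, ⟨_, hC, fun j => m (e j).1 (e j).2, fun j => hmM _ _, fun j => ?_⟩, hx0⟩
  set n := (e j).1
  set k := (e j).2
  calc indC (P := P) (A n ∩ B n k) (hC.meas j) • x0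
      = indC (P := P) (B n k) ((hB n).meas k) •
        (indC (P := P) (A n) (hA.meas n) • x0) := by
        rw [indC_inter_eq (hA.meas n) ((hB n).meas k), mul_comm, mul_smul]
    _ = indC (P := P) (B n k) ((hB n).meas k) •
        (indC (P := P) (A n) (hA.meas n) • x n) := by rw [hx0 n]
    _ = indC (P := P) (A n) (hA.meas n) •
        (indC (P := P) (B n k) ((hB n).meas k) • x n) := by
        rw [← mul_smul, ← mul_smul, mul_comm]
    _ = indC (P := P) (A n) (hA.meas n) •
        (indC (P := P) (B n k) ((hB n).meas k) • m n k) := by rw [hmx n k]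
    _ = indC (P := P) (A n ∩ B n k) (hC.meas j) • m n k := by
        rw [← mul_smul]
        congr 1
        rw [indC_inter_eq (hA.meas n) ((hB n).meas k)]
end

section
/- Let (E,‖·‖) be a random normed module over ℝ with base (Ω,𝓕,P), and let G, M be nonempty L⁰-convex subsets of E with the countable concatenation property such that the interior G° of G in the locally L⁰-convex topology is nonempty and G ∩ M = ∅. Then there exists a P-a.e. bounded random linear functional f ∈ E* such that f(x) ≤ f(y) holds a.e. on the hereditarily disjoint stratification H(G,M) for all x ∈ G and y ∈ M, and f(x) < f(y) a.e. on H(G,M) for all x ∈ G° and y ∈ M. -/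
open MeasureTheory

namespace RNM

variable {Ω : Type} [MeasurableSpace Ω] {P : Measure Ω}

/-- pointwise absolute value on `L⁰(𝓕,ℝ)`. -/
noncomputable def absR (ξ : Ω →ₘ[P] ℝ) : Ω →ₘ[P] ℝ := ξ.comp (fun r => |r|) continuous_abs

variable {E : Type*} [AddCommGroup E] [Module (Ω →ₘ[P] ℝ) E]

/-- the random-norm axioms for an `RN` module over `ℝ`. -/
structure IsRNNormR (nrm : E → Ω →ₘ[P] ℝ) : Prop where
  nonneg : ∀ x, 0 ≤ nrm x
  eq_zero_iff : ∀ x, nrm x = 0 ↔ x = 0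
  smul_eq : ∀ (ξ : Ω →ₘ[P] ℝ) (x : E), nrm (ξ • x) = absR ξ * nrm x
  add_le : ∀ x y, nrm (x + y) ≤ nrm x + nrm y

/-- `L⁰`-convexity of a subset of an `L⁰(𝓕,ℝ)`-module. -/
def L0ConvexR (S : Set E) : Prop :=
  ∀ x ∈ S, ∀ y ∈ S, ∀ ξ : Ω →ₘ[P] ℝ, 0 ≤ ξ → ξ ≤ 1 → ξ • x + (1 - ξ) • y ∈ S

/-- the countable concatenation property for a subset of an `L⁰(𝓕,ℝ)`-module. -/
def SetCCPR (S : Set E) : Prop :=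
  ∀ (A : ℕ → Set Ω) (hA : IsMPartition A) (x : ℕ → E), (∀ n, x n ∈ S) →
    ∃ x0 ∈ S, ∀ n, indR (P := P) (A n) (hA.meas n) • x0 = indR (P := P) (A n) (hA.meas n) • x n

/-- the set of `P`-a.e. bounded random linear functionals on an `RN` module over `ℝ`:
the random conjugate space `E*`. -/
def BddR (nrm : E → Ω →ₘ[P] ℝ) : Set (E →ₗ[Ω →ₘ[P] ℝ] (Ω →ₘ[P] ℝ)) :=
  {f | ∃ ξ : Ω →ₘ[P] ℝ, 0 ≤ ξ ∧ ∀ x, absR (f x) ≤ ξ * nrm x}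

/-- `H` is the hereditarily disjoint stratification `H(G,M)` of `G` and `M`: on every
positive-measure measurable subset of `H` the strata of `G` and `M` are disjoint, and `H`
is the largest such measurable set up to null sets. -/
def DisjStratR (G M : Set E) (H : Set Ω) : Prop :=
  MeasurableSet H ∧
  (∀ (B : Set Ω) (hB : MeasurableSet B), B ⊆ H → 0 < P B →
    ∀ x ∈ G, ∀ y ∈ M, indR (P := P) B hB • x ≠ indR (P := P) B hB • y) ∧
  ∀ H' : Set Ω, MeasurableSet H' →
    (∀ (B : Set Ω) (hB : MeasurableSet B), B ⊆ H' → 0 < P B →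
      ∀ x ∈ G, ∀ y ∈ M, indR (P := P) B hB • x ≠ indR (P := P) B hB • y) →
    P (H' \ H) = 0

/-- the gauge function `p_B` of an `L⁰`-absorbent set `B`:
`p_B(x) = ⋀{ξ ∈ L⁰₊₊ : x ∈ ξ B}` (the lattice infimum, when it exists). -/
noncomputable def gaugeR (B : Set E) (x : E) : Ω →ₘ[P] ℝ := by
  classical
  exact if h : ∃ s : Ω →ₘ[P] ℝ, IsGLB {ξ : Ω →ₘ[P] ℝ | L0pos ξ ∧ ∃ b ∈ B, x = ξ • b} s
    then h.choose else 0

end RNM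


namespace RNM

open MeasureTheory Filter

variable {Ω : Type} [MeasurableSpace Ω] {P : Measure Ω}

instance : IsOrderedAddMonoid (Ω →ₘ[P] ℝ) :=
  { add_le_add_left := fun a b hab c => by
      apply le_of_ae
      filter_upwards [le_ae hab, add_ae a c, add_ae b c] with ω h1 h2 h3
      rw [h2, h3]; linarith }

lemma eq_of_ae {ξ η : Ω →ₘ[P] ℝ} (h : ∀ᵐ ω ∂P, ξ ω = η ω) : ξ = η :=
  AEEqFun.ext h

lemma ae_of_eq {ξ η : Ω →ₘ[P] ℝ} (h : ξ = η) : ∀ᵐ ω ∂P, ξ ω = η ω := by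
  subst h; exact Eventually.of_forall fun _ => rfl

lemma neg_ae (ξ : Ω →ₘ[P] ℝ) : ∀ᵐ ω ∂P, (-ξ) ω = -(ξ ω) :=
  AEEqFun.coeFn_neg ξ

lemma smulR_ae (r : ℝ) (ξ : Ω →ₘ[P] ℝ) : ∀ᵐ ω ∂P, (r • ξ) ω = r * ξ ω := by
  filter_upwards [AEEqFun.coeFn_smul r ξ] with ω h
  simpa [smul_eq_mul] using h

lemma sup_ae (ξ η : Ω →ₘ[P] ℝ) : ∀ᵐ ω ∂P, (ξ ⊔ η) ω = max (ξ ω) (η ω) :=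
  AEEqFun.coeFn_sup ξ η

lemma L0mul_le_mul_left {a b c : Ω →ₘ[P] ℝ} (h : a ≤ b) (hc : 0 ≤ c) : c * a ≤ c * b := by
  apply le_of_ae
  filter_upwards [le_ae h, le_ae hc, mul_ae c a, mul_ae c b, zero_ae ℝ] with ω h1 h2 h3 h4 h5
  rw [h3, h4]; rw [h5] at h2; exact mul_le_mul_of_nonneg_left h1 h2

lemma L0mul_nonneg {a b : Ω →ₘ[P] ℝ} (ha : 0 ≤ a) (hb : 0 ≤ b) : 0 ≤ a * b := by
  apply le_of_ae
  filter_upwards [le_ae ha, le_ae hb, mul_ae a b, zero_ae (P := P) ℝ] with ω h1 h2 h3 h4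
  rw [h3, h4]; rw [h4] at h1 h2; exact mul_nonneg h1 h2

/-- the constant function as an element of `L⁰`. -/
noncomputable def cR (r : ℝ) : Ω →ₘ[P] ℝ :=
  AEEqFun.mk (fun _ => r) aestronglyMeasurable_const

lemma cR_ae (r : ℝ) : ∀ᵐ ω ∂P, (cR r : Ω →ₘ[P] ℝ) ω = r :=
  AEEqFun.coeFn_mk _ _

/-- pointwise inverse on `L⁰`. -/
noncomputable def L0inv (ξ : Ω →ₘ[P] ℝ) : Ω →ₘ[P] ℝ :=
  AEEqFun.mk (fun ω => (ξ ω)⁻¹) (ξ.measurable.inv).aestronglyMeasurable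

lemma L0inv_ae (ξ : Ω →ₘ[P] ℝ) : ∀ᵐ ω ∂P, (L0inv ξ) ω = (ξ ω)⁻¹ :=
  AEEqFun.coeFn_mk _ _

lemma L0pos_inv {ξ : Ω →ₘ[P] ℝ} (h : L0pos ξ) : L0pos (L0inv ξ) := by
  filter_upwards [h, L0inv_ae ξ] with ω h1 h2
  rw [h2]; exact inv_pos.2 h1

lemma L0inv_mul_cancel {ξ : Ω →ₘ[P] ℝ} (h : L0pos ξ) : ξ * L0inv ξ = 1 := by
  apply eq_of_ae
  filter_upwards [h, L0inv_ae ξ, mul_ae ξ (L0inv ξ), one_ae (P := P) ℝ] with ω h1 h2 h3 h4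
  rw [h3, h2, h4]; field_simp

lemma L0pos_mul {ξ η : Ω →ₘ[P] ℝ} (hξ : L0pos ξ) (hη : L0pos η) : L0pos (ξ * η) := by
  filter_upwards [hξ, hη, mul_ae ξ η] with ω h1 h2 h3
  rw [h3]; exact mul_pos h1 h2

lemma L0pos_nonneg {ξ : Ω →ₘ[P] ℝ} (h : L0pos ξ) : 0 ≤ ξ := by
  apply le_of_ae
  filter_upwards [h, zero_ae (P := P) ℝ] with ω h1 h2
  rw [h2]; exact h1.le

lemma indR_ae (A : Set Ω) (hA : MeasurableSet A) :
    ∀ᵐ ω ∂P, (indR (P := P) A hA) ω = A.indicator (fun _ => (1:ℝ)) ω :=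
  AEEqFun.coeFn_mk _ _

end RNM

namespace RNM

open MeasureTheory Filter Real

variable {Ω : Type} [MeasurableSpace Ω] {P : Measure Ω} [IsProbabilityMeasure P]

private lemma integrable_arctan_comp (g : Ω → ℝ) (hg : Measurable g) :
    Integrable (fun ω => arctan (g ω)) P := by
  refine Integrable.mono' (integrable_const (π/2))
    ((Real.continuous_arctan.measurable.comp hg).aestronglyMeasurable)
    (Eventually.of_forall fun ω => ?_)
  rw [Real.norm_eq_abs, abs_le]
  constructor
  · linarith [Real.neg_pi_div_two_lt_arctan (g ω)]
  · linarith [Real.arctan_lt_pi_div_two (g ω)]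

/-- Dedekind completeness of `L⁰(P, ℝ)`: every nonempty order-bounded set has a
least upper bound. -/
theorem exists_isLUB_L0 (S : Set (Ω →ₘ[P] ℝ)) (hne : S.Nonempty) (hbdd : BddAbove S) :
    ∃ g, IsLUB S g := by
  classical
  obtain ⟨b, hb⟩ := hbdd
  set T : Set (Ω →ₘ[P] ℝ) := supClosure S with hT
  have hST : S ⊆ T := subset_supClosure
  have hTclosed : SupClosed T := supClosed_supClosure
  have hub : upperBounds T = upperBounds S := upperBounds_supClosure S
  have hbT : b ∈ upperBounds T := by rw [hub]; exact hb
  -- the integral functional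
  set I : (Ω →ₘ[P] ℝ) → ℝ := fun f => ∫ ω, arctan (f ω) ∂P with hI
  have hint : ∀ f : Ω →ₘ[P] ℝ, Integrable (fun ω => arctan (f ω)) P := fun f =>
    integrable_arctan_comp _ f.measurable
  have hImono : ∀ f g : Ω →ₘ[P] ℝ, f ≤ g → I f ≤ I g := by
    intro f g hfg
    refine integral_mono_ae (hint f) (hint g) ?_
    filter_upwards [le_ae hfg] with ω h using Real.arctan_strictMono.monotone h
  have hIbdd : BddAbove (I '' T) := by
    refine ⟨π/2, ?_⟩
    rintro - ⟨f, -, rfl⟩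
    calc I f ≤ ∫ _, π/2 ∂P := integral_mono_ae (hint f) (integrable_const _)
          (Eventually.of_forall fun ω => (Real.arctan_lt_pi_div_two _).le)
      _ = π/2 := by simp
  set c : ℝ := sSup (I '' T) with hc
  have hTne : T.Nonempty := hne.mono hST
  -- choose an approximating sequence
  have hseq : ∀ n : ℕ, ∃ s ∈ T, c - 1/(n+1) < I s := by
    intro n
    have hlt : c - 1/(n+1) < c := by
      have : (0:ℝ) < 1/(n+1) := by positivity
      linarith
    obtain ⟨-, ⟨s, hsT, rfl⟩, hs⟩ := exists_lt_of_lt_csSup (hTne.image I) hlt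
    exact ⟨s, hsT, hs⟩
  choose s hsT hsI using hseq
  -- partial suprema
  set t : ℕ → (Ω →ₘ[P] ℝ) := fun n => Nat.rec (s 0) (fun n tn => tn ⊔ s (n+1)) n with ht
  have htsucc : ∀ n, t (n+1) = t n ⊔ s (n+1) := fun n => rfl
  have htT : ∀ n, t n ∈ T := by
    intro n; induction n with
    | zero => exact hsT 0
    | succ n ih => exact hTclosed ih (hsT (n+1))
  have htmono : ∀ n, t n ≤ t (n+1) := fun n => by rw [htsucc]; exact le_sup_left
  have hts : ∀ n, s n ≤ t n := by
    intro n; cases n with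
    | zero => exact le_refl _
    | succ n => rw [htsucc]; exact le_sup_right
  have htb : ∀ n, t n ≤ b := fun n => hbT (htT n)
  -- pointwise machinery
  set u : ℕ → Ω → ℝ := fun n => ⇑(t n) with hu
  set vmax : ℕ → Ω → ℝ := fun n => Nat.rec (u 0) (fun n vn ω => max (vn ω) (u (n+1) ω)) n
    with hvmax
  have hvmaxsucc : ∀ n ω, vmax (n+1) ω = max (vmax n ω) (u (n+1) ω) := fun n ω => rfl
  set v : ℕ → Ω → ℝ := fun n ω => min (vmax n ω) (b ω) with hv
  have hvmono : ∀ ω, Monotone fun n => v n ω := by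
    intro ω
    refine monotone_nat_of_le_succ fun n => ?_
    exact min_le_min (by rw [hvmaxsucc]; exact le_max_left _ _) le_rfl
  have hvle : ∀ n ω, v n ω ≤ b ω := fun n ω => min_le_right _ _
  -- a.e. identification of v with t
  have haev : ∀ᵐ ω ∂P, ∀ n, v n ω = u n ω := by
    have h1 : ∀ᵐ ω ∂P, ∀ n, u n ω ≤ u (n+1) ω := by
      rw [ae_all_iff]; intro n; exact le_ae (htmono n)
    have h2 : ∀ᵐ ω ∂P, ∀ n, u n ω ≤ b ω := by
      rw [ae_all_iff]; intro n; exact le_ae (htb n)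
    filter_upwards [h1, h2] with ω h1 h2
    have hvm : ∀ n, vmax n ω = u n ω := by
      intro n; induction n with
      | zero => rfl
      | succ n ih => rw [hvmaxsucc, ih, max_eq_right (h1 n)]
    intro n; rw [hv]; simp only [hvm, min_eq_left (h2 n)]
  -- the limit function
  have hbdd0 : ∀ ω, BddAbove (Set.range fun n => v n ω) := by
    intro ω; exact ⟨b ω, by rintro - ⟨n, rfl⟩; exact hvle n ω⟩
  set g0 : Ω → ℝ := fun ω => ⨆ n, v n ω with hg0
  have htend : ∀ ω, Tendsto (fun n => v n ω) atTop (nhds (g0 ω)) := fun ω =>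
    tendsto_atTop_ciSup (hvmono ω) (hbdd0 ω)
  have hvmeas : ∀ n, Measurable (v n) := by
    have humeas : ∀ n, Measurable (u n) := fun n => (t n).measurable
    have : ∀ n, Measurable (vmax n) := by
      intro n; induction n with
      | zero => exact humeas 0
      | succ n ih => exact Measurable.max ih (humeas (n+1))
    exact fun n => Measurable.min (this n) b.measurable
  have hg0meas : Measurable g0 := by
    refine measurable_of_tendsto_metrizable hvmeas ?_
    rw [tendsto_pi_nhds]; exact htend
  set g : Ω →ₘ[P] ℝ := AEEqFun.mk g0 hg0meas.aestronglyMeasurable with hg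
  have hgae : ∀ᵐ ω ∂P, g ω = g0 ω := AEEqFun.coeFn_mk _ _
  -- g is below every upper bound of S
  have hgle : ∀ z ∈ upperBounds S, g ≤ z := by
    intro z hz
    have hzT : z ∈ upperBounds T := by rw [hub]; exact hz
    apply le_of_ae
    have h2 : ∀ᵐ ω ∂P, ∀ n, u n ω ≤ z ω := by
      rw [ae_all_iff]; intro n; exact le_ae (hzT (htT n))
    filter_upwards [haev, h2, hgae] with ω h1 h2 h3
    rw [h3]
    exact le_of_tendsto (htend ω) (Eventually.of_forall fun n => (h1 n) ▸ h2 n)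
  -- integral of g equals c
  have hIlec : ∀ f ∈ T, I f ≤ c := fun f hf => le_csSup hIbdd ⟨f, hf, rfl⟩
  have hItv : ∀ n, I (t n) = ∫ ω, arctan (v n ω) ∂P := by
    intro n
    refine integral_congr_ae ?_
    filter_upwards [haev] with ω h using by rw [h n]
  have htendI : Tendsto (fun n => ∫ ω, arctan (v n ω) ∂P) atTop
      (nhds (∫ ω, arctan (g0 ω) ∂P)) := by
    refine tendsto_integral_of_dominated_convergence (fun _ => π/2)
      (fun n => ((Real.continuous_arctan.measurable.comp (hvmeas n)).aestronglyMeasurable))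
      (integrable_const _) (fun n => Eventually.of_forall fun ω => ?_)
      (Eventually.of_forall fun ω => (Real.continuous_arctan.tendsto _).comp (htend ω))
    rw [Real.norm_eq_abs, abs_le]
    constructor
    · linarith [Real.neg_pi_div_two_lt_arctan (v n ω)]
    · linarith [Real.arctan_lt_pi_div_two (v n ω)]
  have hIg0 : (∫ ω, arctan (g0 ω) ∂P) = c := by
    have hlo : Tendsto (fun n : ℕ => c - 1/((n:ℝ)+1)) atTop (nhds c) := by
      have h0 : Tendsto (fun n : ℕ => 1/((n:ℝ)+1)) atTop (nhds 0) :=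
        tendsto_one_div_add_atTop_nhds_zero_nat
      simpa using (tendsto_const_nhds (x := c)).sub h0
    refine le_antisymm ?_ ?_
    · refine le_of_tendsto htendI (Eventually.of_forall fun n => ?_)
      rw [← hItv n]; exact hIlec _ (htT n)
    · refine le_of_tendsto_of_tendsto' hlo htendI fun n => ?_
      rw [← hItv n]
      exact le_trans (hsI n).le (hImono _ _ (hts n))
  -- every element of T (hence S) is ≤ g
  have hTg : ∀ f ∈ T, f ≤ g := by
    intro f hf
    have hfT : ∀ n, f ⊔ t n ∈ T := fun n => hTclosed hf (htT n)
    have hJ : ∀ n, I (f ⊔ t n) = ∫ ω, arctan (max (f ω) (v n ω)) ∂P := by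
      intro n
      refine integral_congr_ae ?_
      filter_upwards [haev, sup_ae f (t n)] with ω h1 h2
      rw [h2, h1 n]
    have hmeas2 : ∀ n, Measurable fun ω => max (f ω) (v n ω) := fun n =>
      Measurable.max f.measurable (hvmeas n)
    have htendJ : Tendsto (fun n => ∫ ω, arctan (max (f ω) (v n ω)) ∂P) atTop
        (nhds (∫ ω, arctan (max (f ω) (g0 ω)) ∂P)) := by
      refine tendsto_integral_of_dominated_convergence (fun _ => π/2)
        (fun n => ((Real.continuous_arctan.measurable.comp (hmeas2 n)).aestronglyMeasurable))
        (integrable_const _) (fun n => Eventually.of_forall fun ω => ?_)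
        (Eventually.of_forall fun ω => ?_)
      · rw [Real.norm_eq_abs, abs_le]
        constructor
        · linarith [Real.neg_pi_div_two_lt_arctan (max (f ω) (v n ω))]
        · linarith [Real.arctan_lt_pi_div_two (max (f ω) (v n ω))]
      · exact (Real.continuous_arctan.tendsto _).comp
          ((tendsto_const_nhds (x := f ω)).max (htend ω))
    have hJc : (∫ ω, arctan (max (f ω) (g0 ω)) ∂P) ≤ c := by
      refine le_of_tendsto htendJ (Eventually.of_forall fun n => ?_)
      rw [← hJ n]; exact hIlec _ (hfT n)
    -- the difference has nonnegative integrand and nonpositive integral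
    set d : Ω → ℝ := fun ω => arctan (max (f ω) (g0 ω)) - arctan (g0 ω) with hd
    have hdint : Integrable d P :=
      (integrable_arctan_comp _ (Measurable.max f.measurable hg0meas)).sub
        (integrable_arctan_comp _ hg0meas)
    have hdnonneg : ∀ ω, 0 ≤ d ω := fun ω =>
      sub_nonneg.2 (Real.arctan_strictMono.monotone (le_max_right _ _))
    have hdzero : (∫ ω, d ω ∂P) = 0 := by
      have h1 : (∫ ω, d ω ∂P) ≤ 0 := by
        rw [hd]
        rw [integral_sub (integrable_arctan_comp _ (Measurable.max f.measurable hg0meas))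
          (integrable_arctan_comp _ hg0meas), hIg0]
        linarith [hJc]
      have h2 : (0:ℝ) ≤ ∫ ω, d ω ∂P := integral_nonneg hdnonneg
      linarith
    have hdae : ∀ᵐ ω ∂P, d ω = 0 := by
      have := (integral_eq_zero_iff_of_nonneg hdnonneg hdint).1 hdzero
      filter_upwards [this] with ω h
      simpa using h
    apply le_of_ae
    filter_upwards [hdae, hgae] with ω h1 h2
    rw [h2]
    have h1' : arctan (max (f ω) (g0 ω)) - arctan (g0 ω) = 0 := h1
    have : arctan (max (f ω) (g0 ω)) = arctan (g0 ω) := by linarith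
    have hmax := Real.arctan_injective this
    calc f ω ≤ max (f ω) (g0 ω) := le_max_left _ _
      _ = g0 ω := hmax
  exact ⟨g, fun f hf => hTg f (hST hf), fun z hz => hgle z hz⟩

/-- Dedekind completeness of `L⁰(P, ℝ)`: greatest lower bounds. -/
theorem exists_isGLB_L0 (S : Set (Ω →ₘ[P] ℝ)) (hne : S.Nonempty) (hbdd : BddBelow S) :
    ∃ g, IsGLB S g := by
  obtain ⟨l, hl⟩ := hbdd
  have hne' : (Neg.neg '' S).Nonempty := hne.image _
  have hbdd' : BddAbove (Neg.neg '' S) := by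
    refine ⟨-l, ?_⟩
    rintro - ⟨x, hx, rfl⟩
    exact neg_le_neg (hl hx)
  obtain ⟨g, hg⟩ := exists_isLUB_L0 _ hne' hbdd'
  refine ⟨-g, fun x hx => ?_, fun z hz => ?_⟩
  · have : -x ≤ g := hg.1 ⟨x, hx, rfl⟩
    simpa using neg_le_neg this
  · have : g ≤ -z := hg.2 (by rintro - ⟨x, hx, rfl⟩; exact neg_le_neg (hz hx))
    simpa using neg_le_neg this

end RNM

namespace RNM

open MeasureTheory Filter

variable {Ω : Type} [MeasurableSpace Ω] {P : Measure Ω} [IsProbabilityMeasure P]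

lemma indR_nonneg (A : Set Ω) (hA : MeasurableSet A) : (0:Ω →ₘ[P] ℝ) ≤ indR A hA := by
  apply le_of_ae
  filter_upwards [indR_ae (P := P) A hA, zero_ae (P := P) ℝ] with ω h1 h2
  rw [h1, h2]
  by_cases h : ω ∈ A <;> simp [h]

lemma indR_le_one (A : Set Ω) (hA : MeasurableSet A) : indR (P := P) A hA ≤ 1 := by
  apply le_of_ae
  filter_upwards [indR_ae (P := P) A hA, one_ae (P := P) ℝ] with ω h1 h2
  rw [h1, h2]
  by_cases h : ω ∈ A <;> simp [h]

lemma le_of_mul_pos_left {η a b : Ω →ₘ[P] ℝ} (hη : L0pos η) (h : η * a ≤ η * b) : a ≤ b := by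
  apply le_of_ae
  filter_upwards [hη, le_ae h, mul_ae η a, mul_ae η b] with ω h1 h2 h3 h4
  rw [h3, h4] at h2
  exact le_of_mul_le_mul_left h2 h1

variable {E : Type*} [AddCommGroup E] [Module (Ω →ₘ[P] ℝ) E]

variable (P) in
/-- the index set of the gauge. -/
def gset (C : Set E) (x : E) : Set (Ω →ₘ[P] ℝ) :=
  {ξ : Ω →ₘ[P] ℝ | L0pos ξ ∧ ∃ b ∈ C, x = ξ • b}

lemma isGLB_gaugeR {C : Set E} {x : E} (hne : (gset P C x).Nonempty) :
    IsGLB (gset P C x) (gaugeR (P := P) C x) := by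
  have hbdd : BddBelow (gset P C x) := ⟨0, fun ξ hξ => L0pos_nonneg hξ.1⟩
  have h : ∃ s : Ω →ₘ[P] ℝ, IsGLB {ξ : Ω →ₘ[P] ℝ | L0pos ξ ∧ ∃ b ∈ C, x = ξ • b} s :=
    exists_isGLB_L0 _ hne hbdd
  unfold gaugeR
  rw [dif_pos h]
  exact h.choose_spec

lemma gauge_nonneg {C : Set E} {x : E} (hne : (gset P C x).Nonempty) : 0 ≤ gaugeR (P := P) C x :=
  (isGLB_gaugeR hne).2 fun ξ hξ => L0pos_nonneg hξ.1

lemma gauge_le_one {C : Set E} {x : E} (hne : (gset P C x).Nonempty) (hx : x ∈ C) :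
    gaugeR (P := P) C x ≤ 1 := by
  refine (isGLB_gaugeR hne).1 ⟨?_, x, hx, (one_smul _ x).symm⟩
  filter_upwards [one_ae (P := P) ℝ] with ω h
  rw [h]; exact one_pos

lemma gset_add {C : Set E} (hC : L0ConvexR (P := P) C) {x y : E} {ξ η : Ω →ₘ[P] ℝ}
    (hξ : ξ ∈ gset P C x) (hη : η ∈ gset P C y) : ξ + η ∈ gset P C (x + y) := by
  obtain ⟨hξp, a, haC, hxa⟩ := hξ
  obtain ⟨hηp, b, hbC, hyb⟩ := hη
  have hσ : L0pos (ξ + η) := by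
    filter_upwards [hξp, hηp, add_ae ξ η] with ω h1 h2 h3
    rw [h3]; linarith
  set θ : Ω →ₘ[P] ℝ := ξ * L0inv (ξ + η) with hθ
  have hθ0 : 0 ≤ θ := L0mul_nonneg (L0pos_nonneg hξp) (L0pos_nonneg (L0pos_inv hσ))
  have hθ1 : θ ≤ 1 := by
    apply le_of_ae
    filter_upwards [hξp, hηp, hσ, mul_ae ξ (L0inv (ξ+η)), L0inv_ae (ξ+η), add_ae ξ η,
      one_ae (P := P) ℝ] with ω h1 h2 h3 h4 h5 h6 h7
    rw [h4, h5, h6, h7]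
    rw [h6] at h3
    rw [← div_eq_mul_inv, div_le_one h3]
    linarith
  have hcC : θ • a + (1 - θ) • b ∈ C := hC a haC b hbC θ hθ0 hθ1
  refine ⟨hσ, _, hcC, ?_⟩
  have h1 : (ξ + η) * θ = ξ := by
    apply eq_of_ae
    filter_upwards [hσ, mul_ae (ξ+η) θ, mul_ae ξ (L0inv (ξ+η)), L0inv_ae (ξ+η), add_ae ξ η]
      with ω h1 h2 h3 h4 h5
    rw [h2, h3, h4, h5]
    rw [h5] at h1
    field_simp
  have h2 : (ξ + η) * (1 - θ) = η := by
    apply eq_of_ae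
    filter_upwards [hσ, mul_ae (ξ+η) (1-θ), sub_ae (1:Ω →ₘ[P] ℝ) θ, one_ae (P := P) ℝ,
      mul_ae ξ (L0inv (ξ+η)), L0inv_ae (ξ+η), add_ae ξ η] with ω h1 h2 h3 h4 h5 h6 h7
    rw [h2, h3, h4, h5, h6, h7]
    rw [h7] at h1
    field_simp
    ring
  rw [smul_add, smul_smul, smul_smul, h1, h2, hxa, hyb]

lemma gauge_add {C : Set E} (hC : L0ConvexR (P := P) C)
    (habs : ∀ z : E, (gset P C z).Nonempty) (x y : E) :
    gaugeR (P := P) C (x + y) ≤ gaugeR (P := P) C x + gaugeR (P := P) C y := by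
  have key : ∀ η ∈ gset P C y, gaugeR (P := P) C (x + y) - η ≤ gaugeR (P := P) C x := by
    intro η hη
    refine (isGLB_gaugeR (habs x)).2 fun ξ hξ => ?_
    have h := (isGLB_gaugeR (habs (x+y))).1 (gset_add hC hξ hη)
    exact sub_le_iff_le_add.2 h
  have key2 : gaugeR (P := P) C (x + y) - gaugeR (P := P) C x ≤ gaugeR (P := P) C y := by
    refine (isGLB_gaugeR (habs y)).2 fun η hη => ?_
    exact sub_le_comm.1 (key η hη)
  exact sub_le_iff_le_add'.1 key2

end RNM

namespace RNM

open MeasureTheory Filter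

variable {Ω : Type} [MeasurableSpace Ω] {P : Measure Ω} [IsProbabilityMeasure P]
variable {E : Type*} [AddCommGroup E] [Module (Ω →ₘ[P] ℝ) E]

lemma gset_smul {C : Set E} {x : E} {ξ η : Ω →ₘ[P] ℝ} (hη : L0pos η) (hξ : ξ ∈ gset P C x) :
    η * ξ ∈ gset P C (η • x) := by
  obtain ⟨hξp, b, hbC, hxb⟩ := hξ
  exact ⟨L0pos_mul hη hξp, b, hbC, by rw [hxb, smul_smul]⟩

lemma gauge_smul_le {C : Set E} (habs : ∀ z : E, (gset P C z).Nonempty) {x : E}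
    {η : Ω →ₘ[P] ℝ} (hη : L0pos η) :
    gaugeR (P := P) C (η • x) ≤ η * gaugeR (P := P) C x := by
  have key : L0inv η * gaugeR (P := P) C (η • x) ≤ gaugeR (P := P) C x := by
    refine (isGLB_gaugeR (habs x)).2 fun ξ hξ => ?_
    have h1 := (isGLB_gaugeR (habs (η • x))).1 (gset_smul hη hξ)
    have h2 := L0mul_le_mul_left h1 (L0pos_nonneg (L0pos_inv hη))
    refine h2.trans ?_
    apply le_of_ae
    filter_upwards [hη, mul_ae (L0inv η) (η * ξ), mul_ae η ξ, L0inv_ae η] with ω e1 e2 e3 e4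
    rw [e2, e3, e4]
    field_simp
    exact le_rfl
  have h3 := L0mul_le_mul_left key (L0pos_nonneg hη)
  refine le_trans (le_of_ae ?_) h3
  filter_upwards [hη, mul_ae η (L0inv η * gaugeR (P := P) C (η • x)),
    mul_ae (L0inv η) (gaugeR (P := P) C (η • x)), L0inv_ae η] with ω e1 e2 e3 e4
  rw [e2, e3, e4]
  rw [← mul_assoc, mul_inv_cancel₀ (ne_of_gt e1), one_mul]

lemma gauge_smul {C : Set E} (habs : ∀ z : E, (gset P C z).Nonempty) {x : E}
    {η : Ω →ₘ[P] ℝ} (hη : L0pos η) :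
    gaugeR (P := P) C (η • x) = η * gaugeR (P := P) C x := by
  refine le_antisymm (gauge_smul_le habs hη) ?_
  have h1 := gauge_smul_le habs (x := η • x) (L0pos_inv hη)
  have h2 : L0inv η • η • x = x := by
    rw [smul_smul]
    have : L0inv η * η = 1 := by rw [mul_comm]; exact L0inv_mul_cancel hη
    rw [this, one_smul]
  rw [h2] at h1
  have h3 := L0mul_le_mul_left h1 (L0pos_nonneg hη)
  refine le_trans h3 (le_of_ae ?_)
  filter_upwards [hη, mul_ae η (L0inv η * gaugeR (P := P) C (η • x)),
    mul_ae (L0inv η) (gaugeR (P := P) C (η • x)), L0inv_ae η] with ω e1 e2 e3 e4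
  rw [e2, e3, e4, ← mul_assoc, mul_inv_cancel₀ (ne_of_gt e1), one_mul]

lemma indR_mul_self (A : Set Ω) (hA : MeasurableSet A) :
    indR (P := P) A hA * indR (P := P) A hA = indR (P := P) A hA := by
  apply eq_of_ae
  filter_upwards [mul_ae (indR (P := P) A hA) (indR (P := P) A hA), indR_ae (P := P) A hA]
    with ω e1 e2
  rw [e1, e2]
  by_cases h : ω ∈ A <;> simp [h]

lemma indR_ae_one {A : Set Ω} (hA : MeasurableSet A) :
    ∀ᵐ ω ∂P, ω ∈ A → (indR (P := P) A hA) ω = 1 := by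
  filter_upwards [indR_ae (P := P) A hA] with ω e1 h
  rw [e1]; simp [h]

lemma gauge_local_le {C : Set E} (hC : L0ConvexR (P := P) C)
    (habs : ∀ z : E, (gset P C z).Nonempty) {A : Set Ω} (hA : MeasurableSet A) {u v : E}
    (huv : indR (P := P) A hA • u = indR (P := P) A hA • v) :
    ∀ᵐ ω ∂P, ω ∈ A → gaugeR (P := P) C u ω ≤ gaugeR (P := P) C v ω := by
  set IA : Ω →ₘ[P] ℝ := indR (P := P) A hA with hIAdef
  have hIdem : IA * IA = IA := indR_mul_self A hA
  obtain ⟨η', hη'⟩ := habs u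
  -- mixing
  have hmix : ∀ η ∈ gset P C v, IA * η + (1 - IA) * η' ∈ gset P C u := by
    rintro η ⟨hηp, b, hbC, hvb⟩
    obtain ⟨hη'p, b', hb'C, hub'⟩ := hη'
    have hζp : L0pos (IA * η + (1 - IA) * η') := by
      filter_upwards [hηp, hη'p, add_ae (IA * η) ((1-IA) * η'), mul_ae IA η,
        mul_ae (1-IA) η', sub_ae (1:Ω →ₘ[P] ℝ) IA, one_ae (P := P) ℝ,
        indR_ae (P := P) A hA] with ω e1 e2 e3 e4 e5 e6 e7 e8
      rw [e3, e4, e5, e6, e7, hIAdef, e8]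
      by_cases h : ω ∈ A <;> simp [h] <;> [exact e1; exact e2]
    have hcC : IA • b + (1 - IA) • b' ∈ C := hC b hbC b' hb'C IA (indR_nonneg A hA)
      (indR_le_one A hA)
    refine ⟨hζp, _, hcC, ?_⟩
    have k1 : (IA * η + (1 - IA) * η') * IA = IA * η := by linear_combination (η - η') * hIdem
    have k2 : (IA * η + (1 - IA) * η') * (1 - IA) = (1 - IA) * η' := by
      linear_combination (η' - η) * hIdem
    have e1 : (IA * η + (1 - IA) * η') • (IA • b + (1 - IA) • b')
        = (IA * η) • b + ((1 - IA) * η') • b' := by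
      rw [smul_add, smul_smul, smul_smul, k1, k2]
    rw [e1, mul_smul, mul_smul, ← hvb, ← hub', ← huv, ← add_smul]
    have : IA + (1 - IA) = 1 := by ring
    rw [this, one_smul]
  -- lower bound argument
  have hbound : ∀ η ∈ gset P C v, IA * gaugeR (P := P) C u ≤ IA * η := by
    intro η hη
    have h1 := (isGLB_gaugeR (habs u)).1 (hmix η hη)
    have h2 := L0mul_le_mul_left h1 (indR_nonneg A hA)
    refine h2.trans (le_of_eq ?_)
    linear_combination (η - η') * hIdem
  have hlb : IA * gaugeR (P := P) C u + (1 - IA) * gaugeR (P := P) C v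
      ≤ gaugeR (P := P) C v := by
    refine (isGLB_gaugeR (habs v)).2 fun η hη => ?_
    have h1 := le_ae (hbound η hη)
    have h2 := le_ae ((isGLB_gaugeR (habs v)).1 hη)
    apply le_of_ae
    filter_upwards [h1, h2, add_ae (IA * gaugeR (P := P) C u) ((1-IA) * gaugeR (P := P) C v),
      mul_ae IA (gaugeR (P := P) C u), mul_ae (1-IA) (gaugeR (P := P) C v),
      mul_ae IA η, sub_ae (1:Ω →ₘ[P] ℝ) IA, one_ae (P := P) ℝ, indR_ae (P := P) A hA]
      with ω e1 e2 e3 e4 e5 e6 e7 e8 e9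
    rw [e3, e4, e5, e7, e8, hIAdef, e9]
    rw [e4, e6, hIAdef, e9] at e1
    by_cases h : ω ∈ A <;> simp [h] at e1 ⊢
    · exact e1
    · exact e2
  have h3 := le_ae hlb
  filter_upwards [h3, add_ae (IA * gaugeR (P := P) C u) ((1-IA) * gaugeR (P := P) C v),
    mul_ae IA (gaugeR (P := P) C u), mul_ae (1-IA) (gaugeR (P := P) C v),
    sub_ae (1:Ω →ₘ[P] ℝ) IA, one_ae (P := P) ℝ, indR_ae (P := P) A hA]
    with ω e1 e2 e3 e4 e5 e6 e7 h
  rw [e2, e3, e4, e5, e6, hIAdef, e7] at e1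
  simp [h] at e1
  exact e1

lemma gauge_local {C : Set E} (hC : L0ConvexR (P := P) C)
    (habs : ∀ z : E, (gset P C z).Nonempty) {A : Set Ω} (hA : MeasurableSet A) {u v : E}
    (huv : indR (P := P) A hA • u = indR (P := P) A hA • v) :
    ∀ᵐ ω ∂P, ω ∈ A → gaugeR (P := P) C u ω = gaugeR (P := P) C v ω := by
  filter_upwards [gauge_local_le hC habs hA huv, gauge_local_le hC habs hA huv.symm]
    with ω h1 h2 h
  exact le_antisymm (h1 h) (h2 h)

end RNM

namespace RNM

open MeasureTheory Filter

variable {Ω : Type} [MeasurableSpace Ω] {P : Measure Ω} [IsProbabilityMeasure P]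
variable {E : Type*} [AddCommGroup E] [Module (Ω →ₘ[P] ℝ) E]

lemma L0pos_cR {δ : ℝ} (hδ : 0 < δ) : L0pos (cR (P := P) δ) := by
  filter_upwards [cR_ae (P := P) δ] with ω h
  rw [h]; exact hδ

lemma absR_ae (ξ : Ω →ₘ[P] ℝ) : ∀ᵐ ω ∂P, (absR ξ) ω = |ξ ω| :=
  AEEqFun.coeFn_comp _ _ ξ

lemma gauge_zero {C : Set E} (habs : ∀ z : E, (gset P C z).Nonempty) (h0 : 0 ∈ C) :
    gaugeR (P := P) C (0 : E) = 0 := by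
  have hub : ∀ n : ℕ, gaugeR (P := P) C (0 : E) ≤ cR (1/(n+1)) := by
    intro n
    refine (isGLB_gaugeR (habs 0)).1 ⟨L0pos_cR (by positivity), 0, h0, (smul_zero _).symm⟩
  have hlb : 0 ≤ gaugeR (P := P) C (0 : E) := gauge_nonneg (habs 0)
  apply eq_of_ae
  have h1 : ∀ᵐ ω ∂P, ∀ n : ℕ, gaugeR (P := P) C (0 : E) ω ≤ 1/(n+1) := by
    rw [ae_all_iff]
    intro n
    filter_upwards [le_ae (hub n), cR_ae (P := P) (1/(n+1):ℝ)] with ω e1 e2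
    rwa [e2] at e1
  filter_upwards [h1, le_ae hlb, zero_ae (P := P) ℝ] with ω e1 e2 e3
  rw [e3]; rw [e3] at e2
  have : gaugeR (P := P) C (0 : E) ω ≤ 0 := by
    by_contra hpos
    push_neg at hpos
    obtain ⟨n, hn⟩ := exists_nat_one_div_lt hpos
    exact absurd (e1 n) (by push_neg; exact_mod_cast hn)
  linarith

section NormBound

variable (nrm : E → Ω →ₘ[P] ℝ) (hnrm : IsRNNormR nrm) {C : Set E} {ε₀ : Ω →ₘ[P] ℝ}

include hnrm

lemma mem_gset_ball (hε₀ : L0pos ε₀) (hball : ∀ w : E, ltAE (nrm w) ε₀ → w ∈ C)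
    (x : E) {δ : ℝ} (hδ : 0 < δ) :
    L0inv ε₀ * (nrm x + cR δ) ∈ gset P C x := by
  set ξ : Ω →ₘ[P] ℝ := L0inv ε₀ * (nrm x + cR δ) with hξ
  have hξpos : L0pos ξ := by
    filter_upwards [hε₀, le_ae (hnrm.nonneg x), mul_ae (L0inv ε₀) (nrm x + cR δ),
      add_ae (nrm x) (cR δ), cR_ae (P := P) δ, L0inv_ae ε₀, zero_ae (P := P) ℝ]
      with ω e1 e2 e3 e4 e5 e6 e7
    rw [e3, e4, e5, e6]
    rw [e7] at e2
    exact mul_pos (inv_pos.2 e1) (by linarith)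
  have hb : L0inv ξ • x ∈ C := by
    refine hball _ ?_
    rw [hnrm.smul_eq]
    filter_upwards [hε₀, le_ae (hnrm.nonneg x), mul_ae (absR (L0inv ξ)) (nrm x),
      absR_ae (L0inv ξ), L0inv_ae ξ, mul_ae (L0inv ε₀) (nrm x + cR δ),
      add_ae (nrm x) (cR δ), cR_ae (P := P) δ, L0inv_ae ε₀, zero_ae (P := P) ℝ]
      with ω e1 e2 e3 e4 e5 e6 e7 e8 e9 e10
    rw [e3, e4, e5, hξ, e6, e7, e8, e9]
    rw [e10] at e2
    rw [abs_of_nonneg (by positivity)]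
    rw [mul_inv, inv_inv]
    have h1 : nrm x ω < nrm x ω + δ := by linarith
    calc ε₀ ω * (nrm x ω + δ)⁻¹ * nrm x ω = ε₀ ω * (nrm x ω / (nrm x ω + δ)) := by ring
      _ < ε₀ ω * 1 := by
          apply mul_lt_mul_of_pos_left _ e1
          rw [div_lt_one (by positivity)]
          exact h1
      _ = ε₀ ω := mul_one _
  refine ⟨hξpos, _, hb, ?_⟩
  rw [smul_smul, L0inv_mul_cancel hξpos, one_smul]

lemma gauge_norm_bound (hε₀ : L0pos ε₀) (hball : ∀ w : E, ltAE (nrm w) ε₀ → w ∈ C)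
    (x : E) {δ : ℝ} (hδ : 0 < δ) :
    gaugeR (P := P) C x ≤ L0inv ε₀ * (nrm x + cR δ) :=
  (isGLB_gaugeR ⟨_, mem_gset_ball nrm hnrm hε₀ hball x hδ⟩).1
    (mem_gset_ball nrm hnrm hε₀ hball x hδ)

lemma gset_nonempty_of_ball (hε₀ : L0pos ε₀) (hball : ∀ w : E, ltAE (nrm w) ε₀ → w ∈ C) :
    ∀ z : E, (gset P C z).Nonempty := fun z =>
  ⟨_, mem_gset_ball nrm hnrm hε₀ hball z one_pos⟩

end NormBound

end RNM

namespace RNM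

open MeasureTheory Filter

section HB

variable {Ω : Type} [MeasurableSpace Ω] {P : Measure Ω} [IsProbabilityMeasure P]
variable {E : Type*} [AddCommGroup E] [Module (Ω →ₘ[P] ℝ) E]
variable {p : E → Ω →ₘ[P] ℝ}

/-- reduction of the extension inequality from `ξ = ±1` to arbitrary `ξ ∈ L⁰`. -/
lemma key_ineq
    (hsmul : ∀ {η : Ω →ₘ[P] ℝ}, L0pos η → ∀ z : E, p (η • z) = η * p z)
    (hloc : ∀ {A : Set Ω} (hA : MeasurableSet A) {u v : E},
      indR (P := P) A hA • u = indR (P := P) A hA • v →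
      ∀ᵐ ω ∂P, ω ∈ A → p u ω = p v ω)
    (f : E →ₗ.[Ω →ₘ[P] ℝ] Ω →ₘ[P] ℝ)
    (hf : ∀ a : f.domain, f a ≤ p a) (x : E) (c : Ω →ₘ[P] ℝ)
    (hplus : ∀ a : f.domain, f a + c ≤ p ((a : E) + x))
    (hminus : ∀ a : f.domain, f a - c ≤ p ((a : E) - x)) :
    ∀ (a : f.domain) (ξ : Ω →ₘ[P] ℝ), f a + ξ * c ≤ p ((a : E) + ξ • x) := by
  intro a ξ
  have hrmeas : Measurable (⇑ξ) := ξ.measurable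
  -- positive part
  set Ap : Set Ω := {ω | 0 < ξ ω} with hApdef
  have hAp : MeasurableSet Ap := measurableSet_lt measurable_const hrmeas
  set ηp : Ω →ₘ[P] ℝ := AEEqFun.mk (fun ω => if 0 < ξ ω then ξ ω else 1)
    ((Measurable.ite hAp hrmeas measurable_const).aestronglyMeasurable) with hηpdef
  have hηp_ae : ∀ᵐ ω ∂P, ηp ω = if 0 < ξ ω then ξ ω else 1 := AEEqFun.coeFn_mk _ _
  have hηp_pos : L0pos ηp := by
    filter_upwards [hηp_ae] with ω h
    rw [h]; split <;> [assumption; exact one_pos]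
  have hposineq : f a + ηp * c ≤ p ((a : E) + ηp • x) := by
    set a' : f.domain := (L0inv ηp) • a with ha'
    have hfa' : f a' = L0inv ηp * f a := by
      rw [ha', f.map_smul, smul_eq_mul]
    have e1 : ηp * (f a' + c) = f a + ηp * c := by
      rw [hfa', mul_add, ← mul_assoc, L0inv_mul_cancel hηp_pos, one_mul]
    have e2 : ηp • ((a' : E) + x) = (a : E) + ηp • x := by
      have hcoe : ((a' : f.domain) : E) = L0inv ηp • (a : E) := rfl
      rw [hcoe, smul_add, smul_smul, L0inv_mul_cancel hηp_pos, one_smul]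
    calc f a + ηp * c = ηp * (f a' + c) := e1.symm
      _ ≤ ηp * p ((a' : E) + x) := L0mul_le_mul_left (hplus a') (L0pos_nonneg hηp_pos)
      _ = p (ηp • ((a' : E) + x)) := (hsmul hηp_pos _).symm
      _ = p ((a : E) + ηp • x) := by rw [e2]
  have hscal : indR (P := P) Ap hAp * ηp = indR (P := P) Ap hAp * ξ := by
    apply eq_of_ae
    filter_upwards [mul_ae (indR (P := P) Ap hAp) ηp, mul_ae (indR (P := P) Ap hAp) ξ,
      indR_ae (P := P) Ap hAp, hηp_ae] with ω e1 e2 e3 e4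
    rw [e1, e2, e3, e4]
    by_cases h : ω ∈ Ap
    · have h' : 0 < ξ ω := h
      rw [Set.indicator_of_mem h, if_pos h']
    · rw [Set.indicator_of_notMem h]; ring
  have hconn : indR (P := P) Ap hAp • ((a:E) + ηp • x)
      = indR (P := P) Ap hAp • ((a:E) + ξ • x) := by
    rw [smul_add, smul_add, smul_smul, smul_smul, hscal]
  have haep : ∀ᵐ ω ∂P, ω ∈ Ap → f a ω + ξ ω * c ω ≤ p ((a:E) + ξ • x) ω := by
    filter_upwards [le_ae hposineq, hloc hAp hconn, hηp_ae, add_ae (f a) (ηp * c),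
      mul_ae ηp c] with ω e1 e2 e3 e4 e5 hω
    have hω' : 0 < ξ ω := hω
    rw [e4, e5, e3, if_pos hω'] at e1
    rw [← e2 hω]
    exact e1
  -- negative part
  set An : Set Ω := {ω | ξ ω < 0} with hAndef
  have hAn : MeasurableSet An := measurableSet_lt hrmeas measurable_const
  set ηn : Ω →ₘ[P] ℝ := AEEqFun.mk (fun ω => if ξ ω < 0 then -(ξ ω) else 1)
    ((Measurable.ite hAn hrmeas.neg measurable_const).aestronglyMeasurable) with hηndef
  have hηn_ae : ∀ᵐ ω ∂P, ηn ω = if ξ ω < 0 then -(ξ ω) else 1 := AEEqFun.coeFn_mk _ _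
  have hηn_pos : L0pos ηn := by
    filter_upwards [hηn_ae] with ω h
    rw [h]; split <;> [linarith; exact one_pos]
  have hnegineq : f a - ηn * c ≤ p ((a : E) - ηn • x) := by
    set a'' : f.domain := (L0inv ηn) • a with ha''
    have hfa'' : f a'' = L0inv ηn * f a := by
      rw [ha'', f.map_smul, smul_eq_mul]
    have e1 : ηn * (f a'' - c) = f a - ηn * c := by
      rw [hfa'', mul_sub, ← mul_assoc, L0inv_mul_cancel hηn_pos, one_mul]
    have e2 : ηn • ((a'' : E) - x) = (a : E) - ηn • x := by
      have hcoe : ((a'' : f.domain) : E) = L0inv ηn • (a : E) := rfl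
      rw [hcoe, smul_sub, smul_smul, L0inv_mul_cancel hηn_pos, one_smul]
    calc f a - ηn * c = ηn * (f a'' - c) := e1.symm
      _ ≤ ηn * p ((a'' : E) - x) := L0mul_le_mul_left (hminus a'') (L0pos_nonneg hηn_pos)
      _ = p (ηn • ((a'' : E) - x)) := (hsmul hηn_pos _).symm
      _ = p ((a : E) - ηn • x) := by rw [e2]
  have hscaln : indR (P := P) An hAn * (-ηn) = indR (P := P) An hAn * ξ := by
    apply eq_of_ae
    filter_upwards [mul_ae (indR (P := P) An hAn) (-ηn), mul_ae (indR (P := P) An hAn) ξ,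
      indR_ae (P := P) An hAn, hηn_ae, neg_ae ηn] with ω e1 e2 e3 e4 e5
    rw [e1, e2, e3, e5, e4]
    by_cases h : ω ∈ An
    · have h' : ξ ω < 0 := h
      rw [Set.indicator_of_mem h, if_pos h']; ring
    · rw [Set.indicator_of_notMem h]; ring
  have hconnn : indR (P := P) An hAn • ((a:E) - ηn • x)
      = indR (P := P) An hAn • ((a:E) + ξ • x) := by
    rw [sub_eq_add_neg, ← neg_smul, smul_add, smul_add, smul_smul, smul_smul, hscaln]
  have haen : ∀ᵐ ω ∂P, ω ∈ An → f a ω + ξ ω * c ω ≤ p ((a:E) + ξ • x) ω := by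
    filter_upwards [le_ae hnegineq, hloc hAn hconnn, hηn_ae, sub_ae (f a) (ηn * c),
      mul_ae ηn c] with ω e1 e2 e3 e4 e5 hω
    have hω' : ξ ω < 0 := hω
    rw [e4, e5, e3, if_pos hω'] at e1
    rw [← e2 hω]
    calc f a ω + ξ ω * c ω = f a ω - (-(ξ ω)) * c ω := by ring
      _ ≤ p ((a:E) - ηn • x) ω := e1
  -- zero part
  set A0 : Set Ω := {ω | ξ ω = 0} with hA0def
  have hA0 : MeasurableSet A0 := hrmeas (measurableSet_singleton 0)
  have hscal0 : indR (P := P) A0 hA0 * ξ = 0 := by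
    apply eq_of_ae
    filter_upwards [mul_ae (indR (P := P) A0 hA0) ξ, indR_ae (P := P) A0 hA0,
      zero_ae (P := P) ℝ] with ω e1 e2 e3
    rw [e1, e2, e3]
    by_cases h : ω ∈ A0
    · rw [Set.indicator_of_mem h]
      have : ξ ω = 0 := h
      rw [this]; ring
    · rw [Set.indicator_of_notMem h]; ring
  have hconn0 : indR (P := P) A0 hA0 • ((a:E) + ξ • x) = indR (P := P) A0 hA0 • (a:E) := by
    rw [smul_add, smul_smul, hscal0, zero_smul, add_zero]
  have hae0 : ∀ᵐ ω ∂P, ω ∈ A0 → f a ω + ξ ω * c ω ≤ p ((a:E) + ξ • x) ω := by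
    filter_upwards [le_ae (hf a), hloc hA0 hconn0] with ω e1 e2 hω
    have h0 : ξ ω = 0 := hω
    rw [h0, e2 hω]
    simpa using e1
  -- combine
  apply le_of_ae
  filter_upwards [haep, haen, hae0, add_ae (f a) (ξ * c), mul_ae ξ c] with ω h1 h2 h3 e1 e2
  rw [e1, e2]
  rcases lt_trichotomy (ξ ω) 0 with h | h | h
  · exact h2 h
  · exact h3 h
  · exact h1 h

/-- one-step extension of a dominated partial linear functional. -/
lemma extend_step (hzero : p 0 = 0)
    (f : E →ₗ.[Ω →ₘ[P] ℝ] Ω →ₘ[P] ℝ) (x : E) (c : Ω →ₘ[P] ℝ)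
    (hkey : ∀ (a : f.domain) (ξ : Ω →ₘ[P] ℝ), f a + ξ * c ≤ p ((a : E) + ξ • x)) :
    ∃ g : E →ₗ.[Ω →ₘ[P] ℝ] Ω →ₘ[P] ℝ, f ≤ g ∧ (∀ b : g.domain, g b ≤ p b) ∧
      ∃ hx : x ∈ g.domain, g ⟨x, hx⟩ = c := by
  classical
  -- well-definedness on the span of x
  have H : ∀ ζ : Ω →ₘ[P] ℝ, ζ • x = 0 → ζ • c = 0 := by
    intro ζ hζ
    have h1 := hkey 0 ζ
    have h2 := hkey 0 (-ζ)
    rw [f.map_zero, zero_add] at h1 h2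
    have e0 : ((0 : f.domain) : E) = (0 : E) := rfl
    rw [e0, zero_add, hζ, hzero] at h1
    rw [e0, zero_add, neg_smul, hζ, neg_zero, hzero, neg_mul] at h2
    have : ζ * c = 0 := le_antisymm h1 (by rwa [neg_nonpos] at h2)
    rwa [smul_eq_mul]
  set s : E →ₗ.[Ω →ₘ[P] ℝ] Ω →ₘ[P] ℝ := LinearPMap.mkSpanSingleton' x c H with hs
  have hsdom : s.domain = Submodule.span (Ω →ₘ[P] ℝ) {x} := by
    rw [hs, LinearPMap.domain_mkSpanSingleton]
  -- values of f on f.domain ∩ span{x} are forced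
  have hforced : ∀ (u : f.domain) (ζ : Ω →ₘ[P] ℝ), (u : E) = ζ • x → f u = ζ * c := by
    intro u ζ huζ
    have h1 := hkey u (-ζ)
    rw [neg_smul, ← sub_eq_add_neg, huζ, sub_self, hzero, neg_mul] at h1
    have h2 := hkey (-u) ζ
    have e1 : ((-u : f.domain) : E) = -(u : E) := rfl
    rw [e1, huζ, neg_add_cancel, hzero] at h2
    have e2 : f (-u) = -(f u) := by
      have := f.toFun.map_neg u
      exact this
    rw [e2] at h2
    have h1' : f u - ζ * c ≤ 0 := by rwa [sub_eq_add_neg]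
    have h2' : ζ * c - f u ≤ 0 := by
      have h4 : -(f u) + ζ * c ≤ 0 := h2
      rwa [neg_add_eq_sub] at h4
    have h3 : (0 : Ω →ₘ[P] ℝ) ≤ f u - ζ * c := sub_nonneg.2 (sub_nonpos.1 h2')
    exact sub_eq_zero.1 (le_antisymm h1' h3)
  -- compatibility of f and s
  have compat : ∀ (u : f.domain) (v : s.domain), (u : E) = v → f u = s v := by
    intro u v huv
    have hv : (v : E) ∈ Submodule.span (Ω →ₘ[P] ℝ) {x} := hsdom ▸ v.2
    obtain ⟨ζ, hζ⟩ := Submodule.mem_span_singleton.1 hv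
    have hvval : s v = ζ * c := by
      have hmem2 : ζ • x ∈ s.domain := hζ ▸ v.2
      have hvv : v = ⟨ζ • x, hmem2⟩ := Subtype.ext hζ.symm
      rw [hvv, ← smul_eq_mul]
      exact LinearPMap.mkSpanSingleton'_apply x c H ζ hmem2
    rw [hvval]
    exact hforced u ζ (huv.trans hζ.symm)
  set g : E →ₗ.[Ω →ₘ[P] ℝ] Ω →ₘ[P] ℝ := f.sup s compat with hg
  have hfg : f ≤ g := f.left_le_sup s compat
  have hsg : s ≤ g := f.right_le_sup s compat
  have hxs : x ∈ s.domain := by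
    rw [hsdom]
    exact Submodule.mem_span_singleton_self x
  have hxg : x ∈ g.domain := hsg.1 hxs
  refine ⟨g, hfg, ?_, hxg, ?_⟩
  · -- domination
    intro b
    have hb : (b : E) ∈ f.domain ⊔ s.domain := b.2
    obtain ⟨u, hu, v, hv, huv⟩ := Submodule.mem_sup.1 hb
    obtain ⟨ζ, hζ⟩ := Submodule.mem_span_singleton.1 (hsdom ▸ hv)
    have happ : g b = f ⟨u, hu⟩ + s ⟨v, hv⟩ :=
      LinearPMap.sup_apply compat ⟨u, hu⟩ ⟨v, hv⟩ b huv
    have hsv : s ⟨v, hv⟩ = ζ * c := by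
      have hmem2 : ζ • x ∈ s.domain := hζ ▸ hv
      have hvv : (⟨v, hv⟩ : s.domain) = ⟨ζ • x, hmem2⟩ := Subtype.ext hζ.symm
      rw [hvv, ← smul_eq_mul]
      exact LinearPMap.mkSpanSingleton'_apply x c H ζ hmem2
    rw [happ, hsv]
    have := hkey ⟨u, hu⟩ ζ
    have hbe : (b : E) = (u : E) + ζ • x := by rw [← huv, hζ]
    rw [hbe]
    exact this
  · -- value at x
    have h0x : ((0 : f.domain) : E) + (x : E) = x := by
      rw [ZeroMemClass.coe_zero, zero_add]
    have happ := LinearPMap.sup_apply compat 0 ⟨x, hxs⟩ ⟨x, hxg⟩ h0x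
    refine happ.trans ?_
    rw [f.map_zero, zero_add]
    exact LinearPMap.mkSpanSingleton'_apply_self x c H hxs

/-- the random Hahn–Banach extension theorem: a dominated partial linear functional
extends to a dominated total linear functional. -/
lemma hahn_banach
    (hadd : ∀ x y : E, p (x + y) ≤ p x + p y)
    (hsmul : ∀ {η : Ω →ₘ[P] ℝ}, L0pos η → ∀ z : E, p (η • z) = η * p z)
    (hloc : ∀ {A : Set Ω} (hA : MeasurableSet A) {u v : E},
      indR (P := P) A hA • u = indR (P := P) A hA • v →
      ∀ᵐ ω ∂P, ω ∈ A → p u ω = p v ω)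
    (hzero : p 0 = 0)
    (f₀ : E →ₗ.[Ω →ₘ[P] ℝ] Ω →ₘ[P] ℝ) (hf₀ : ∀ a : f₀.domain, f₀ a ≤ p a) :
    ∃ F : E →ₗ[Ω →ₘ[P] ℝ] (Ω →ₘ[P] ℝ), (∀ z : E, F z ≤ p z) ∧
      ∀ a : f₀.domain, F a = f₀ a := by
  classical
  set SS : Set (E →ₗ.[Ω →ₘ[P] ℝ] Ω →ₘ[P] ℝ) :=
    {g | f₀ ≤ g ∧ ∀ b : g.domain, g b ≤ p b} with hSS
  have hch : ∀ c ⊆ SS, IsChain (· ≤ ·) c → ∀ y ∈ c, ∃ ub ∈ SS, ∀ z ∈ c, z ≤ ub := by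
    intro ch hchs hchain y hy
    have hdir : DirectedOn (· ≤ ·) ch := hchain.directedOn
    refine ⟨LinearPMap.sSup ch hdir, ⟨?_, ?_⟩, fun z hz => LinearPMap.le_sSup hdir hz⟩
    · exact (hchs hy).1.trans (LinearPMap.le_sSup hdir hy)
    · intro b
      have hb : (b : E) ∈ sSup (LinearPMap.domain '' ch) := b.2
      have hne : (LinearPMap.domain '' ch).Nonempty := ⟨_, ⟨y, hy, rfl⟩⟩
      have hdir2 : DirectedOn (· ≤ ·) (LinearPMap.domain '' ch) := by
        rintro - ⟨u, hu, rfl⟩ - ⟨v, hv, rfl⟩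
        rcases hdir u hu v hv with ⟨w, hw, h1, h2⟩
        exact ⟨w.domain, ⟨w, hw, rfl⟩, h1.1, h2.1⟩
      obtain ⟨-, ⟨m, hm, rfl⟩, hbm⟩ := (Submodule.mem_sSup_of_directed hne hdir2).1 hb
      have hle := LinearPMap.le_sSup hdir hm
      have heq := hle.2 (x := ⟨(b : E), hbm⟩) (y := b) rfl
      rw [← heq]
      exact (hchs hm).2 ⟨(b : E), hbm⟩
  have hf₀SS : f₀ ∈ SS := ⟨le_refl _, hf₀⟩
  obtain ⟨m, hf₀m, hmax⟩ := zorn_le_nonempty₀ SS hch f₀ hf₀SS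
  have hmSS : m ∈ SS := hmax.1
  -- the maximal element is total
  have htop : m.domain = ⊤ := by
    by_contra hne
    obtain ⟨x, hx⟩ : ∃ x : E, x ∉ m.domain := by
      by_contra h
      push_neg at h
      exact hne (Submodule.eq_top_iff'.2 h)
    -- choose the extension value
    set LS : Set (Ω →ₘ[P] ℝ) := (fun a : m.domain => m a - p ((a : E) - x)) '' Set.univ
      with hLS
    have hLSne : LS.Nonempty := ⟨_, ⟨0, trivial, rfl⟩⟩
    have hLSbdd : BddAbove LS := by
      refine ⟨p x, ?_⟩
      rintro - ⟨a, -, rfl⟩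
      have h1 : m a ≤ p (a : E) := hmSS.2 a
      have h2 : p (a : E) ≤ p ((a : E) - x) + p x := by
        have := hadd ((a : E) - x) x
        rwa [sub_add_cancel] at this
      have h3 : m a ≤ p ((a : E) - x) + p x := h1.trans h2
      exact sub_le_iff_le_add'.2 h3
    obtain ⟨cv, hcv⟩ := exists_isLUB_L0 LS hLSne hLSbdd
    have hplus : ∀ a : m.domain, m a + cv ≤ p ((a : E) + x) := by
      intro b
      have hub : p ((b : E) + x) - m b ∈ upperBounds LS := by
        rintro - ⟨a, -, rfl⟩
        have h1 : m (a + b) ≤ p ((a : E) + (b : E)) := by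
          have := hmSS.2 (a + b)
          exact this
        have h2 : p ((a : E) + (b : E)) ≤ p ((a : E) - x) + p ((b : E) + x) := by
          have := hadd ((a : E) - x) ((b : E) + x)
          have he : (a : E) - x + ((b : E) + x) = (a : E) + (b : E) := by abel
          rwa [he] at this
        have h3 : m a + m b ≤ p ((a : E) - x) + p ((b : E) + x) := by
          rw [← m.map_add]
          exact h1.trans h2
        have h4 : m a - p ((a : E) - x) ≤ p ((b : E) + x) - m b := by
          have := sub_le_sub h3 (le_refl (p ((a : E) - x) + m b))
          calc m a - p ((a : E) - x)
              = m a + m b - (p ((a : E) - x) + m b) := by abel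
            _ ≤ p ((a : E) - x) + p ((b : E) + x) - (p ((a : E) - x) + m b) :=
                sub_le_sub_right h3 _
            _ = p ((b : E) + x) - m b := by abel
        exact h4
      have := hcv.2 hub
      calc m b + cv ≤ m b + (p ((b : E) + x) - m b) := add_le_add (le_refl _) this
        _ = p ((b : E) + x) := by abel
    have hminus : ∀ a : m.domain, m a - cv ≤ p ((a : E) - x) := by
      intro a
      have hmem : m a - p ((a : E) - x) ∈ LS := ⟨a, trivial, rfl⟩
      have h1 := hcv.1 hmem
      calc m a - cv ≤ m a - (m a - p ((a : E) - x)) := sub_le_sub_left h1 _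
        _ = p ((a : E) - x) := by abel
    have hkey := key_ineq hsmul hloc m hmSS.2 x cv hplus hminus
    obtain ⟨g, hmg, hgbound, hxg, -⟩ := extend_step hzero m x cv hkey
    have hgSS : g ∈ SS := ⟨hf₀m.trans hmg, hgbound⟩
    have := hmax.2 hgSS hmg
    exact hx (this.1 hxg)
  -- convert to a total linear map
  have hmem : ∀ z : E, z ∈ m.domain := fun z => htop ▸ Submodule.mem_top
  set F : E →ₗ[Ω →ₘ[P] ℝ] (Ω →ₘ[P] ℝ) :=
    { toFun := fun z => m ⟨z, hmem z⟩
      map_add' := fun z w => by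
        show m ⟨z + w, hmem (z + w)⟩ = m ⟨z, hmem z⟩ + m ⟨w, hmem w⟩
        have h2 : (⟨z + w, hmem (z + w)⟩ : m.domain)
            = (⟨z, hmem z⟩ : m.domain) + ⟨w, hmem w⟩ := Subtype.ext rfl
        rw [h2]
        exact m.map_add _ _
      map_smul' := fun r z => by
        show m ⟨r • z, hmem (r • z)⟩ = r • m ⟨z, hmem z⟩
        have h2 : (⟨r • z, hmem (r • z)⟩ : m.domain)
            = r • (⟨z, hmem z⟩ : m.domain) := Subtype.ext rfl
        rw [h2]
        exact m.map_smul r ⟨z, hmem z⟩ } with hF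
  refine ⟨F, fun z => hmSS.2 ⟨z, hmem z⟩, fun a => ?_⟩
  exact (hf₀m.2 (x := a) (y := ⟨(a : E), hmem a⟩) rfl).symm

end HB

end RNM

set_option maxHeartbeats 2000000 in
open MeasureTheory RNM in
/-- Hyperplane separation in `RN` modules over `ℝ` (Lemma 3.1): if `G`, `M` are nonempty
`L⁰`-convex sets with the countable concatenation property, `G` has nonempty
`𝓣_c`-interior and `G ∩ M = ∅`, then some `f ∈ E*` separates `G` from `M` a.e. on the
hereditarily disjoint stratification `H(G,M)`, strictly so on the interior of `G`. -/
theorem separation_RN_real {Ω : Type} [MeasurableSpace Ω] {P : Measure Ω}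
    [IsProbabilityMeasure P] {E : Type*} [AddCommGroup E] [Module (Ω →ₘ[P] ℝ) E]
    (nrm : E → Ω →ₘ[P] ℝ) (hnrm : IsRNNormR nrm) (G M : Set E)
    (hGne : G.Nonempty) (hMne : M.Nonempty) (hGc : L0ConvexR (P := P) G) (hMc : L0ConvexR (P := P) M)
    (hGcc : SetCCPR (P := P) G) (hMcc : SetCCPR (P := P) M)
    (hint : (@interior E (TcTop nrm) G).Nonempty) (hdisj : Disjoint G M)
    (H : Set Ω) (hH : DisjStratR (P := P) G M H) :
    ∃ f ∈ BddR nrm,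
      (∀ x ∈ G, ∀ y ∈ M, ∀ᵐ ω ∂P, ω ∈ H → f x ω ≤ f y ω) ∧
      (∀ x ∈ @interior E (TcTop nrm) G, ∀ y ∈ M, ∀ᵐ ω ∂P, ω ∈ H → f x ω < f y ω) := by
  classical
  obtain ⟨hHmeas, hHdisj, -⟩ := hH
  -- the set of "ball interior" points of G
  set N : Set E := {n | ∃ ε : Ω →ₘ[P] ℝ, L0pos ε ∧
    ∀ y : E, ltAE (nrm (y - n)) ε → y ∈ G} with hNdef
  have hintN : @interior E (TcTop nrm) G ⊆ N := by
    intro x hx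
    letI := TcTop nrm
    obtain ⟨U, hUG, hUopen, hxU⟩ := mem_interior.1 hx
    obtain ⟨⟨ε, hε⟩, hball⟩ := hUopen x hxU
    exact ⟨ε, hε, fun y hy => hUG (hball hy)⟩
  have hnrm0 : nrm 0 = 0 := (hnrm.eq_zero_iff 0).2 rfl
  have hNG : N ⊆ G := by
    rintro n ⟨ε, hε, hball⟩
    refine hball n ?_
    rw [sub_self, hnrm0]
    filter_upwards [hε, zero_ae (P := P) ℝ] with ω h1 h2
    rw [h2]; exact h1
  -- convex combinations with one endpoint in N
  have hcombN : ∀ x ∈ G, ∀ n ∈ N, ∀ ξ : Ω →ₘ[P] ℝ, L0pos ξ → ξ ≤ 1 →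
      ξ • n + (1 - ξ) • x ∈ N := by
    rintro x hx n ⟨ε, hε, hball⟩ ξ hξpos hξ1
    refine ⟨ξ * ε, L0pos_mul hξpos hε, fun y hy => ?_⟩
    set w : E := y - (ξ • n + (1 - ξ) • x) with hw
    have hyeq : y = ξ • (n + L0inv ξ • w) + (1 - ξ) • x := by
      rw [smul_add, smul_smul, L0inv_mul_cancel hξpos, one_smul, hw]
      abel
    have hmem : n + L0inv ξ • w ∈ G := by
      refine hball _ ?_
      rw [add_sub_cancel_left, hnrm.smul_eq]
      filter_upwards [hy, hξpos, hε, mul_ae (absR (L0inv ξ)) (nrm w), absR_ae (L0inv ξ),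
        L0inv_ae ξ, mul_ae ξ ε] with ω e1 e2 e3 e4 e5 e6 e7
      rw [e4, e5, e6, abs_of_nonneg (inv_nonneg.2 e2.le)]
      rw [e7] at e1
      rw [inv_mul_lt_iff₀ e2]
      exact e1
    rw [hyeq]
    exact hGc _ hmem _ hx ξ (L0pos_nonneg hξpos) hξ1
  -- N is L⁰-convex
  have hNconv : L0ConvexR (P := P) N := by
    rintro n₁ ⟨ε₁, hε₁, hb₁⟩ n₂ ⟨ε₂, hε₂, hb₂⟩ ξ hξ0 hξ1
    refine ⟨ε₁ ⊓ ε₂, L0pos_inf hε₁ hε₂, fun y hy => ?_⟩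
    set w : E := y - (ξ • n₁ + (1 - ξ) • n₂) with hw
    have h₁ : n₁ + w ∈ G := by
      refine hb₁ _ ?_
      rw [add_sub_cancel_left]
      filter_upwards [hy, AEEqFun.coeFn_inf ε₁ ε₂] with ω e1 e2
      rw [e2] at e1
      exact e1.trans_le inf_le_left
    have h₂ : n₂ + w ∈ G := by
      refine hb₂ _ ?_
      rw [add_sub_cancel_left]
      filter_upwards [hy, AEEqFun.coeFn_inf ε₁ ε₂] with ω e1 e2
      rw [e2] at e1
      exact e1.trans_le inf_le_right
    have hws : ξ • w + (1 - ξ) • w = w := by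
      rw [← add_smul]
      have h1 : ξ + (1 - ξ) = 1 := by ring
      rw [h1, one_smul]
    have hyeq : y = ξ • (n₁ + w) + (1 - ξ) • (n₂ + w) := by
      rw [smul_add, smul_add]
      calc y = ξ • n₁ + (1 - ξ) • n₂ + (ξ • w + (1 - ξ) • w) := by rw [hws, hw]; abel
        _ = _ := by abel
    rw [hyeq]
    exact hGc _ h₁ _ h₂ ξ hξ0 hξ1
  -- base points
  obtain ⟨x₀, hx₀⟩ := hint
  have hn₀N : x₀ ∈ N := hintN hx₀
  obtain ⟨m₀, hm₀M⟩ := hMne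
  set n₀ : E := x₀ with hn₀def
  set z₀ : E := m₀ - n₀ with hz₀def
  -- the auxiliary convex set C
  set C : Set E := {c | ∃ n ∈ N, ∃ m ∈ M, c = n - m + z₀} with hCdef
  have hCconv : L0ConvexR (P := P) C := by
    rintro c₁ ⟨n₁, hn₁, m₁, hm₁, rfl⟩ c₂ ⟨n₂, hn₂, m₂, hm₂, rfl⟩ ξ hξ0 hξ1
    refine ⟨ξ • n₁ + (1 - ξ) • n₂, hNconv _ hn₁ _ hn₂ ξ hξ0 hξ1,
      ξ • m₁ + (1 - ξ) • m₂, hMc _ hm₁ _ hm₂ ξ hξ0 hξ1, ?_⟩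
    have h1 : ξ + (1 - ξ) = 1 := by ring
    calc ξ • (n₁ - m₁ + z₀) + (1 - ξ) • (n₂ - m₂ + z₀)
        = (ξ • n₁ + (1-ξ) • n₂) - (ξ • m₁ + (1-ξ) • m₂) + (ξ + (1-ξ)) • z₀ := by
          simp only [smul_add, smul_sub, add_smul]
          abel
      _ = ξ • n₁ + (1 - ξ) • n₂ - (ξ • m₁ + (1 - ξ) • m₂) + z₀ := by rw [h1, one_smul]
  have h0C : (0 : E) ∈ C := ⟨n₀, hn₀N, m₀, hm₀M, by rw [hz₀def]; abel⟩
  -- a norm-ball inside C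
  obtain ⟨ε₀, hε₀pos, hball₀⟩ := id hn₀N
  have hballC : ∀ w : E, ltAE (nrm w) ε₀ → w ∈ C := by
    intro w hw
    have hn : n₀ + w ∈ N := by
      refine ⟨ε₀ - nrm w, ?_, fun y hy => ?_⟩
      · filter_upwards [hw, sub_ae ε₀ (nrm w)] with ω e1 e2
        rw [e2]; exact sub_pos.2 e1
      · refine hball₀ y ?_
        have htri : nrm (y - n₀) ≤ nrm (y - (n₀ + w)) + nrm w := by
          have := hnrm.add_le (y - (n₀ + w)) w
          have he : y - (n₀ + w) + w = y - n₀ := by abel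
          rwa [he] at this
        filter_upwards [hy, le_ae htri, add_ae (nrm (y - (n₀ + w))) (nrm w),
          sub_ae ε₀ (nrm w)] with ω e1 e2 e3 e4
        rw [e4] at e1
        rw [e3] at e2
        linarith
    exact ⟨n₀ + w, hn, m₀, hm₀M, by rw [hz₀def]; abel⟩
  have habs : ∀ z : E, (gset P C z).Nonempty :=
    gset_nonempty_of_ball nrm hnrm hε₀pos hballC
  -- the gauge of C
  set p : E → Ω →ₘ[P] ℝ := gaugeR (P := P) C with hpdef
  have hpadd : ∀ x y : E, p (x + y) ≤ p x + p y := gauge_add hCconv habs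
  have hpsmul : ∀ {η : Ω →ₘ[P] ℝ}, L0pos η → ∀ z : E, p (η • z) = η * p z :=
    fun hη z => gauge_smul habs hη
  have hploc : ∀ {A : Set Ω} (hA : MeasurableSet A) {u v : E},
      indR (P := P) A hA • u = indR (P := P) A hA • v →
      ∀ᵐ ω ∂P, ω ∈ A → p u ω = p v ω := by
    intro A hA u v huv
    exact gauge_local hCconv habs hA huv
  have hpzero : p 0 = 0 := gauge_zero habs h0C
  have hpnonneg : ∀ z : E, 0 ≤ p z := fun z => gauge_nonneg (habs z)
  have hple1 : ∀ z ∈ C, p z ≤ 1 := fun z hz => gauge_le_one (habs z) hz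
  -- `1 ≤ p z₀` a.e. on `H`
  have hge1 : ∀ᵐ ω ∂P, ω ∈ H → 1 ≤ p z₀ ω := by
    by_contra hcon
    set B : Set Ω := H ∩ {ω | p z₀ ω < 1} with hBdef
    have hBmeas : MeasurableSet B := hHmeas.inter
      (measurableSet_lt (p z₀).measurable measurable_const)
    have hBpos : 0 < P B := by
      rw [pos_iff_ne_zero]
      intro h0
      apply hcon
      have hae : ∀ᵐ ω ∂P, ω ∉ B := by
        rw [ae_iff]
        simpa [not_not] using h0
      filter_upwards [hae] with ω hω hH'
      by_contra hlt
      exact hω ⟨hH', not_le.1 hlt⟩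
    have hnotall : ¬ ∀ ξ ∈ gset P C z₀, ∀ᵐ ω ∂P, ω ∈ B → 1 ≤ ξ ω := by
      intro hall
      have hlb : (p z₀) ⊔ indR (P := P) B hBmeas ∈ lowerBounds (gset P C z₀) := by
        intro ξ hξ
        apply le_of_ae
        filter_upwards [hall ξ hξ, le_ae ((isGLB_gaugeR (habs z₀)).1 hξ),
          sup_ae (p z₀) (indR (P := P) B hBmeas), indR_ae (P := P) B hBmeas, hξ.1]
          with ω e1 e2 e3 e4 e5
        rw [e3, e4]
        by_cases h : ω ∈ B
        · rw [Set.indicator_of_mem h]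
          exact max_le e2 (e1 h)
        · rw [Set.indicator_of_notMem h]
          exact max_le e2 e5.le
      have hle := (isGLB_gaugeR (habs z₀)).2 hlb
      have hB0 : ∀ᵐ ω ∂P, ω ∉ B := by
        filter_upwards [le_ae hle, sup_ae (p z₀) (indR (P := P) B hBmeas),
          indR_ae (P := P) B hBmeas] with ω e1 e2 e3
        intro hωB
        rw [e2, e3, Set.indicator_of_mem hωB] at e1
        have h1 : (1:ℝ) ≤ p z₀ ω := (le_max_right _ _).trans e1
        have h2 : p z₀ ω < 1 := hωB.2
        linarith
      rw [ae_iff] at hB0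
      simp only [not_not] at hB0
      exact absurd hB0 hBpos.ne'
    push_neg at hnotall
    obtain ⟨ξ, hξgset, hξbad⟩ := hnotall
    set B' : Set Ω := B ∩ {ω | ξ ω < 1} with hB'def
    have hB'meas : MeasurableSet B' := hBmeas.inter
      (measurableSet_lt ξ.measurable measurable_const)
    have hB'pos : 0 < P B' := by
      rw [pos_iff_ne_zero]
      intro h0
      apply hξbad
      have hae : ∀ᵐ ω ∂P, ω ∉ B' := by
        rw [ae_iff]
        simpa [not_not] using h0
      filter_upwards [hae] with ω hω hωB
      by_contra hlt
      exact hω hωB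
    obtain ⟨hξpos, cel, hcelC, hz₀eq⟩ := hξgset
    obtain ⟨n, hnN, m, hmM, rfl⟩ := hcelC
    set I : Ω →ₘ[P] ℝ := indR (P := P) B' hB'meas with hIdef
    have hIdem : I * I = I := indR_mul_self B' hB'meas
    set ξ'' : Ω →ₘ[P] ℝ := I * ξ + (1 - I) * cR (P := P) (1/2) with hξ''def
    have hξ''0 : 0 ≤ ξ'' := by
      apply le_of_ae
      filter_upwards [hξpos, add_ae (I * ξ) ((1 - I) * cR (P := P) (1/2)), mul_ae I ξ,
        mul_ae (1 - I) (cR (P := P) (1/2)), sub_ae (1 : Ω →ₘ[P] ℝ) I, one_ae (P := P) ℝ,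
        indR_ae (P := P) B' hB'meas, cR_ae (P := P) (1/2 : ℝ), zero_ae (P := P) ℝ]
        with ω e1 e2 e3 e4 e5 e6 e7 e8 e9
      rw [e9, e2, e3, e4, e5, e6, hIdef, e7, e8]
      by_cases h : ω ∈ B' <;> simp [h] <;> positivity
    have hξ''1 : ξ'' ≤ 1 := by
      apply le_of_ae
      filter_upwards [add_ae (I * ξ) ((1 - I) * cR (P := P) (1/2)), mul_ae I ξ,
        mul_ae (1 - I) (cR (P := P) (1/2)), sub_ae (1 : Ω →ₘ[P] ℝ) I, one_ae (P := P) ℝ,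
        indR_ae (P := P) B' hB'meas, cR_ae (P := P) (1/2 : ℝ)]
        with ω e2 e3 e4 e5 e6 e7 e8
      rw [e2, e3, e4, e5, e6, hIdef, e7, e8]
      by_cases h : ω ∈ B'
      · have hlt : ξ ω < 1 := h.2
        simp [h]
        linarith
      · simp [h]
        norm_num
    have hGel : ξ'' • n + (1 - ξ'') • n₀ ∈ G := hGc n (hNG hnN) n₀ (hNG hn₀N) ξ'' hξ''0 hξ''1
    have hMel : ξ'' • m + (1 - ξ'') • m₀ ∈ M := hMc m hmM m₀ hm₀M ξ'' hξ''0 hξ''1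
    have hIξ : I * ξ'' = I * ξ := by
      rw [hξ''def]
      linear_combination (ξ - cR (P := P) (1/2)) * hIdem
    have hI1ξ : I * (1 - ξ'') = I * (1 - ξ) := by
      rw [hξ''def]
      linear_combination (cR (P := P) (1/2) - ξ) * hIdem
    have e1 : I • z₀ = (I * ξ) • n - (I * ξ) • m + (I * ξ) • z₀ := by
      calc I • z₀ = I • (ξ • (n - m + z₀)) := by rw [← hz₀eq]
        _ = (I * ξ) • (n - m + z₀) := by rw [smul_smul]
        _ = _ := by simp only [smul_add, smul_sub]
    have e2 : (I * (1 - ξ)) • z₀ = (I * ξ) • n - (I * ξ) • m := by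
      have h3 : I * (1 - ξ) = I - I * ξ := by ring
      rw [h3, sub_smul, e1]
      abel
    have e3 : (I * (1 - ξ)) • m₀ - (I * (1 - ξ)) • n₀ = (I * ξ) • n - (I * ξ) • m := by
      rw [← smul_sub, ← hz₀def]
      exact e2
    have hmain : I • (ξ'' • n + (1 - ξ'') • n₀) = I • (ξ'' • m + (1 - ξ'') • m₀) := by
      rw [smul_add, smul_add, smul_smul, smul_smul, smul_smul, smul_smul, hIξ, hI1ξ]
      have h4 := sub_eq_sub_iff_add_eq_add.1 e3
      -- h4 : (I*(1-ξ))•m₀ + (I*ξ)•m = (I*ξ)•n + (I*(1-ξ))•n₀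
      calc (I * ξ) • n + (I * (1 - ξ)) • n₀
          = (I * (1 - ξ)) • m₀ + (I * ξ) • m := h4.symm
        _ = (I * ξ) • m + (I * (1 - ξ)) • m₀ := add_comm _ _
    have hB'H : B' ⊆ H := fun ω hω => hω.1.1
    exact hHdisj B' hB'meas hB'H hB'pos _ hGel _ hMel hmain
  -- the indicator of H is dominated by the gauge of z₀
  have hIH : indR (P := P) H hHmeas ≤ p z₀ := by
    apply le_of_ae
    filter_upwards [hge1, le_ae (hpnonneg z₀), indR_ae (P := P) H hHmeas, zero_ae (P := P) ℝ]
      with ω e1 e2 e3 e4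
    rw [e3]
    rw [e4] at e2
    by_cases h : ω ∈ H
    · rw [Set.indicator_of_mem h]
      exact e1 h
    · rw [Set.indicator_of_notMem h]
      exact e2
  -- apply the random Hahn–Banach theorem
  set c₀ : Ω →ₘ[P] ℝ := indR (P := P) H hHmeas with hc₀def
  have hbotval : ∀ a : (⊥ : E →ₗ.[Ω →ₘ[P] ℝ] Ω →ₘ[P] ℝ).domain,
      (⊥ : E →ₗ.[Ω →ₘ[P] ℝ] Ω →ₘ[P] ℝ) a = 0 := fun a => rfl
  have hbotcoe : ∀ a : (⊥ : E →ₗ.[Ω →ₘ[P] ℝ] Ω →ₘ[P] ℝ).domain, (a : E) = 0 := fun a =>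
    (Submodule.mem_bot _).1 a.2
  have hbot_le : ∀ a : (⊥ : E →ₗ.[Ω →ₘ[P] ℝ] Ω →ₘ[P] ℝ).domain,
      (⊥ : E →ₗ.[Ω →ₘ[P] ℝ] Ω →ₘ[P] ℝ) a ≤ p (a : E) := by
    intro a
    rw [hbotval a, hbotcoe a, hpzero]
  have hplus : ∀ a : (⊥ : E →ₗ.[Ω →ₘ[P] ℝ] Ω →ₘ[P] ℝ).domain,
      (⊥ : E →ₗ.[Ω →ₘ[P] ℝ] Ω →ₘ[P] ℝ) a + c₀ ≤ p ((a : E) + z₀) := by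
    intro a
    rw [hbotval a, hbotcoe a, zero_add, zero_add]
    exact hIH
  have hminus : ∀ a : (⊥ : E →ₗ.[Ω →ₘ[P] ℝ] Ω →ₘ[P] ℝ).domain,
      (⊥ : E →ₗ.[Ω →ₘ[P] ℝ] Ω →ₘ[P] ℝ) a - c₀ ≤ p ((a : E) - z₀) := by
    intro a
    rw [hbotval a, hbotcoe a, zero_sub, zero_sub]
    refine le_trans ?_ (hpnonneg (-z₀))
    rw [neg_nonpos]
    exact indR_nonneg H hHmeas
  have hkey0 := key_ineq hpsmul hploc ⊥ hbot_le z₀ c₀ hplus hminus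
  obtain ⟨f₀, -, hf₀le, hz₀dom, hf₀z₀⟩ := extend_step hpzero ⊥ z₀ c₀ hkey0
  obtain ⟨F, hFle, hFagree⟩ := hahn_banach hpadd hpsmul hploc hpzero f₀ hf₀le
  have hFz₀ : F z₀ = c₀ := by
    have h := hFagree ⟨z₀, hz₀dom⟩
    rw [h, hf₀z₀]
  -- boundedness: F ∈ E*
  have honeside : ∀ x : E, ∀ᵐ ω ∂P, F x ω ≤ (ε₀ ω)⁻¹ * nrm x ω := by
    intro x
    have hbk : ∀ k : ℕ, ∀ᵐ ω ∂P,
        F x ω ≤ (ε₀ ω)⁻¹ * nrm x ω + (ε₀ ω)⁻¹ * (1/(k+1)) := by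
      intro k
      have hFsm : F ((cR (P := P) ((k:ℝ)+1)) • x) = cR (P := P) ((k:ℝ)+1) * F x := by
        rw [F.map_smul, smul_eq_mul]
      have hb1 : F ((cR (P := P) ((k:ℝ)+1)) • x) ≤ p ((cR (P := P) ((k:ℝ)+1)) • x) := hFle _
      have hb2 : p ((cR (P := P) ((k:ℝ)+1)) • x) ≤ L0inv ε₀ * (nrm ((cR (P := P) ((k:ℝ)+1)) • x) + cR 1) :=
        gauge_norm_bound nrm hnrm hε₀pos hballC _ one_pos
      have hb3 : nrm ((cR (P := P) ((k:ℝ)+1)) • x) = absR (cR (P := P) ((k:ℝ)+1)) * nrm x := hnrm.smul_eq _ _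
      have hb4 := (hFsm ▸ hb1).trans (hb3 ▸ hb2)
      have hb5 := le_ae hb4
      filter_upwards [hb5, hε₀pos, le_ae (hnrm.nonneg x), mul_ae (cR (P := P) ((k:ℝ)+1)) (F x),
        cR_ae (P := P) ((k:ℝ)+1), mul_ae (L0inv ε₀) (absR (cR (P := P) ((k:ℝ)+1)) * nrm x + cR 1),
        add_ae (absR (cR (P := P) ((k:ℝ)+1)) * nrm x) (cR 1), mul_ae (absR (cR (P := P) ((k:ℝ)+1))) (nrm x),
        absR_ae (cR (P := P) ((k:ℝ)+1)), cR_ae (P := P) (1:ℝ), L0inv_ae ε₀, zero_ae (P := P) ℝ]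
        with ω e1 e2 e3 e4 e5 e6 e7 e8 e9 e10 e11 e12
      rw [e4, e5, e6, e7, e8, e9, e5, e10, e11] at e1
      rw [e12] at e3
      have hkpos : (0:ℝ) < (k:ℝ) + 1 := by positivity
      rw [abs_of_pos hkpos] at e1
      have hinv : (0:ℝ) < (ε₀ ω)⁻¹ := inv_pos.2 e2
      calc F x ω = (((k:ℝ)+1) * F x ω) / ((k:ℝ)+1) := by field_simp
        _ ≤ ((ε₀ ω)⁻¹ * (((k:ℝ)+1) * nrm x ω + 1)) / ((k:ℝ)+1) := by
            exact div_le_div_of_nonneg_right e1 hkpos.le |>.trans_eq rfl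
        _ = (ε₀ ω)⁻¹ * nrm x ω + (ε₀ ω)⁻¹ * (1/((k:ℝ)+1)) := by field_simp
    rw [← ae_all_iff] at hbk
    filter_upwards [hbk] with ω hω
    have htd : Filter.Tendsto (fun k : ℕ => (ε₀ ω)⁻¹ * nrm x ω + (ε₀ ω)⁻¹ * (1/((k:ℝ)+1)))
        Filter.atTop (nhds ((ε₀ ω)⁻¹ * nrm x ω)) := by
      have h0 : Filter.Tendsto (fun k : ℕ => 1/((k:ℝ)+1)) Filter.atTop (nhds 0) :=
        tendsto_one_div_add_atTop_nhds_zero_nat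
      have := (tendsto_const_nhds (x := (ε₀ ω)⁻¹ * nrm x ω)).add
        ((tendsto_const_nhds (x := (ε₀ ω)⁻¹)).mul h0)
      simpa using this
    exact ge_of_tendsto htd (Filter.Eventually.of_forall hω)
  have hFneg : ∀ x : E, F (-x) = -(F x) := fun x => map_neg F x
  have hnrmneg : ∀ x : E, nrm (-x) = nrm x := by
    intro x
    have h1 : (-x : E) = ((-1 : Ω →ₘ[P] ℝ)) • x := (neg_one_smul _ x).symm
    rw [h1, hnrm.smul_eq]
    have h2 : absR (-1 : Ω →ₘ[P] ℝ) = 1 := by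
      apply eq_of_ae
      filter_upwards [absR_ae (-1 : Ω →ₘ[P] ℝ), neg_ae (1 : Ω →ₘ[P] ℝ),
        one_ae (P := P) ℝ] with ω e1 e2 e3
      rw [e1, e2, e3]
      norm_num
    rw [h2, one_mul]
  have hFbdd : F ∈ BddR nrm := by
    refine ⟨L0inv ε₀, L0pos_nonneg (L0pos_inv hε₀pos), fun x => ?_⟩
    apply le_of_ae
    have h2 := honeside (-x)
    rw [hFneg, hnrmneg] at h2
    filter_upwards [honeside x, h2, absR_ae (F x), mul_ae (L0inv ε₀) (nrm x),
      L0inv_ae ε₀, neg_ae (F x)] with ω e1 e2 e3 e4 e5 e6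
    rw [e3, e4, e5]
    rw [e6] at e2
    rw [abs_le]
    constructor <;> linarith
  -- the separation inequality on N
  have hsepN : ∀ n ∈ N, ∀ m ∈ M, ∀ᵐ ω ∂P, ω ∈ H → F n ω ≤ F m ω := by
    intro n hn m hm
    have hCmem : n - m + z₀ ∈ C := ⟨n, hn, m, hm, rfl⟩
    have h1 : F (n - m + z₀) ≤ 1 := (hFle _).trans (hple1 _ hCmem)
    have h2 : F (n - m + z₀) = F n - F m + c₀ := by
      rw [map_add, map_sub, hFz₀]
    rw [h2] at h1
    filter_upwards [le_ae h1, add_ae (F n - F m) c₀, sub_ae (F n) (F m),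
      indR_ae_one (P := P) hHmeas, one_ae (P := P) ℝ] with ω e1 e2 e3 e4 e5 hω
    rw [e2, e3, e5, hc₀def, e4 hω] at e1
    linarith
  -- the separation inequality on G
  have hsepG : ∀ x ∈ G, ∀ m ∈ M, ∀ᵐ ω ∂P, ω ∈ H → F x ω ≤ F m ω := by
    intro x hx m hm
    have hnk : ∀ k : ℕ, (cR (P := P) (1/((k:ℝ)+1))) • n₀ + (1 - cR (P := P) (1/((k:ℝ)+1))) • x ∈ N := by
      intro k
      refine hcombN x hx n₀ hn₀N _ (L0pos_cR (P := P) (by positivity)) ?_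
      apply le_of_ae
      filter_upwards [cR_ae (P := P) (1/((k:ℝ)+1)), one_ae (P := P) ℝ] with ω e1 e2
      rw [e1, e2]
      rw [div_le_one (by positivity)]
      linarith [Nat.cast_nonneg (α := ℝ) k]
    have hk : ∀ k : ℕ, ∀ᵐ ω ∂P, ω ∈ H →
        (1/((k:ℝ)+1)) * F n₀ ω + (1 - 1/((k:ℝ)+1)) * F x ω ≤ F m ω := by
      intro k
      have hval : F ((cR (P := P) (1/((k:ℝ)+1))) • n₀ + (1 - cR (P := P) (1/((k:ℝ)+1))) • x)
          = cR (P := P) (1/((k:ℝ)+1)) * F n₀ + (1 - cR (P := P) (1/((k:ℝ)+1))) * F x := by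
        rw [map_add, F.map_smul, F.map_smul, smul_eq_mul, smul_eq_mul]
      filter_upwards [hsepN _ (hnk k) m hm, ae_of_eq hval,
        add_ae (cR (P := P) (1/((k:ℝ)+1)) * F n₀) ((1 - cR (P := P) (1/((k:ℝ)+1))) * F x),
        mul_ae (cR (P := P) (1/((k:ℝ)+1))) (F n₀), mul_ae (1 - cR (P := P) (1/((k:ℝ)+1))) (F x),
        sub_ae (1 : Ω →ₘ[P] ℝ) (cR (P := P) (1/((k:ℝ)+1))), one_ae (P := P) ℝ,
        cR_ae (P := P) (1/((k:ℝ)+1))] with ω e1 e2 e3 e4 e5 e6 e7 e8 hω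
      have := e1 hω
      rw [e2, e3, e4, e5, e6, e7, e8] at this
      exact this
    rw [← ae_all_iff] at hk
    filter_upwards [hk] with ω hω hωH
    have htd : Filter.Tendsto
        (fun k : ℕ => (1/((k:ℝ)+1)) * F n₀ ω + (1 - 1/((k:ℝ)+1)) * F x ω)
        Filter.atTop (nhds (F x ω)) := by
      have h0 : Filter.Tendsto (fun k : ℕ => 1/((k:ℝ)+1)) Filter.atTop (nhds 0) :=
        tendsto_one_div_add_atTop_nhds_zero_nat
      have h1 := (h0.mul_const (F n₀ ω)).add
        (((tendsto_const_nhds (x := (1:ℝ))).sub h0).mul_const (F x ω))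
      simpa using h1
    exact le_of_tendsto htd (Filter.Eventually.of_forall fun k => hω k hωH)
  -- strict separation on the interior
  refine ⟨F, hFbdd, hsepG, ?_⟩
  intro x hx m hm
  obtain ⟨ε, hεpos, hball⟩ := hintN hx
  have hxG : x ∈ G := hNG (hintN hx)
  set ξw : Ω →ₘ[P] ℝ := cR (P := P) (1/2) * (ε * L0inv (nrm z₀ + 1)) with hξwdef
  have hz₀1pos : L0pos (nrm z₀ + 1) := by
    filter_upwards [le_ae (hnrm.nonneg z₀), add_ae (nrm z₀) 1, one_ae (P := P) ℝ,
      zero_ae (P := P) ℝ] with ω e1 e2 e3 e4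
    rw [e2, e3]
    rw [e4] at e1
    linarith
  have hξwpos : L0pos ξw :=
    L0pos_mul (L0pos_cR (P := P) (by norm_num)) (L0pos_mul hεpos (L0pos_inv hz₀1pos))
  have hxwG : x + ξw • z₀ ∈ G := by
    refine hball _ ?_
    rw [add_sub_cancel_left, hnrm.smul_eq]
    filter_upwards [hεpos, le_ae (hnrm.nonneg z₀), mul_ae (absR ξw) (nrm z₀), absR_ae ξw,
      mul_ae (cR (P := P) (1/2)) (ε * L0inv (nrm z₀ + 1)), mul_ae ε (L0inv (nrm z₀ + 1)),
      L0inv_ae (nrm z₀ + 1), add_ae (nrm z₀) 1, one_ae (P := P) ℝ, cR_ae (P := P) (1/2 : ℝ),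
      zero_ae (P := P) ℝ] with ω e1 e2 e3 e4 e5 e6 e7 e8 e9 e10 e11
    rw [e11] at e2
    rw [e3, e4, hξwdef, e5, e6, e7, e8, e9, e10]
    rw [abs_of_pos (by positivity)]
    have h1 : nrm z₀ ω / (nrm z₀ ω + 1) < 1 := by
      rw [div_lt_one (by linarith)]
      linarith
    calc 1/2 * (ε ω * (nrm z₀ ω + 1)⁻¹) * nrm z₀ ω
        = ε ω * (1/2 * (nrm z₀ ω / (nrm z₀ ω + 1))) := by ring
      _ < ε ω * 1 := by
          apply mul_lt_mul_of_pos_left _ e1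
          nlinarith [h1]
      _ = ε ω := mul_one _
  have hvalxw : F (x + ξw • z₀) = F x + ξw * c₀ := by
    rw [map_add, F.map_smul, smul_eq_mul, hFz₀]
  filter_upwards [hsepG _ hxwG m hm, ae_of_eq hvalxw, add_ae (F x) (ξw * c₀),
    mul_ae ξw c₀, indR_ae_one (P := P) hHmeas, hξwpos] with ω e1 e2 e3 e4 e5 e6 hω
  have h1 := e1 hω
  rw [e2, e3, e4, hc₀def, e5 hω] at h1
  calc F x ω < F x ω + ξw ω * 1 := by nlinarith [e6]
    _ ≤ F m ω := h1
end

section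
/- (Helly theorem in RN modules, necessity direction) Let (E,‖·‖) be a random normed module over ℂ with base (Ω,𝓕,P), f₁,…,fₙ ∈ E*, ξ₁,…,ξₙ ∈ L⁰(𝓕,ℂ), and β ∈ L⁰₊. Suppose that for every ε ∈ L⁰₊₊ there exists x_ε ∈ E with fᵢ(x_ε) = ξᵢ for all i and ‖x_ε‖ ≤ β + ε. Then for all λ₁,…,λₙ ∈ L⁰(𝓕,ℂ) one has |Σₖ λₖ ξₖ| ≤ β · ‖Σₖ λₖ fₖ‖* in L⁰. -/
open MeasureTheory

section Completeness
open MeasureTheory Filter Topology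
set_option linter.unusedSectionVars false

variable {Ω : Type} [MeasurableSpace Ω] {P : Measure Ω} [IsProbabilityMeasure P]

lemma myle_ae {ξ η : Ω →ₘ[P] ℝ} (h : ξ ≤ η) : ∀ᵐ ω ∂P, ξ ω ≤ η ω := AEEqFun.coeFn_le.2 h

noncomputable def Ifun (ξ : Ω →ₘ[P] ℝ) : ℝ := ∫ ω, Real.arctan (ξ ω) ∂P

lemma intg (ξ : Ω →ₘ[P] ℝ) : Integrable (fun ω => Real.arctan (ξ ω)) P := by
  refine ⟨Real.continuous_arctan.comp_aestronglyMeasurable ξ.aestronglyMeasurable, ?_⟩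
  refine HasFiniteIntegral.of_bounded (C := Real.pi / 2) (ae_of_all _ fun ω => ?_)
  rw [Real.norm_eq_abs, abs_le]
  exact ⟨(Real.neg_pi_div_two_lt_arctan _).le, (Real.arctan_lt_pi_div_two _).le⟩

lemma Ifun_mono {ξ η : Ω →ₘ[P] ℝ} (h : ξ ≤ η) : Ifun ξ ≤ Ifun η := by
  refine integral_mono_ae (intg ξ) (intg η) ?_
  filter_upwards [myle_ae h] with ω hω using Real.arctan_strictMono.monotone hω

lemma Ifun_le (ξ : Ω →ₘ[P] ℝ) : Ifun ξ ≤ Real.pi / 2 := by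
  calc Ifun ξ ≤ ∫ _, Real.pi / 2 ∂P :=
        integral_mono (intg ξ) (integrable_const _) fun ω => (Real.arctan_lt_pi_div_two _).le
    _ = Real.pi / 2 := by simp

theorem exists_isLUB_of_bddAE {S : Set (Ω →ₘ[P] ℝ)} (hne : S.Nonempty)
    {b : Ω →ₘ[P] ℝ} (hb : b ∈ upperBounds S) : ∃ s, IsLUB S s := by
  classical
  set T : Set (Ω →ₘ[P] ℝ) := supClosure S with hT
  have hTne : T.Nonempty := hne.mono subset_supClosure
  have hbT : b ∈ upperBounds T := by rw [hT, upperBounds_supClosure]; exact hb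
  set M : ℝ := sSup (Ifun '' T) with hM
  have hbdd : BddAbove (Ifun '' T) := ⟨Real.pi / 2, by rintro _ ⟨ξ, -, rfl⟩; exact Ifun_le ξ⟩
  have hIleM : ∀ ξ ∈ T, Ifun ξ ≤ M := fun ξ hξ => le_csSup hbdd ⟨ξ, hξ, rfl⟩
  -- choose approximating sequence
  have hu : ∀ n : ℕ, ∃ u ∈ T, M - 1 / (n + 1) < Ifun u := by
    intro n
    have h1 : M - 1 / (n + 1 : ℝ) < M := by
      have : (0:ℝ) < 1 / (n+1) := by positivity
      linarith
    obtain ⟨_, ⟨u, huT, rfl⟩, hlt⟩ := exists_lt_of_lt_csSup (hTne.image Ifun) h1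
    exact ⟨u, huT, hlt⟩
  choose u huT huI using hu
  -- monotone sequence of partial sups
  set g : ℕ → (Ω →ₘ[P] ℝ) := fun n => Nat.rec (u 0) (fun k gk => gk ⊔ u (k+1)) n with hg
  have hgsucc : ∀ n, g (n+1) = g n ⊔ u (n+1) := fun n => rfl
  have hgT : ∀ n, g n ∈ T := by
    intro n; induction n with
    | zero => exact huT 0
    | succ k ih => rw [hgsucc]; exact supClosed_supClosure ih (huT (k+1))
  have hgmono : Monotone g := monotone_nat_of_le_succ fun n => by rw [hgsucc]; exact le_sup_left
  have hule : ∀ n, u n ≤ g n := by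
    intro n; cases n with
    | zero => exact le_rfl
    | succ k => rw [hgsucc]; exact le_sup_right
  have hgb : ∀ n, g n ≤ b := fun n => hbT (hgT n)
  have hIg_lt : ∀ n, M - 1 / (n + 1) < Ifun (g n) := fun n => (huI n).trans_le (Ifun_mono (hule n))
  have hIg_le : ∀ n, Ifun (g n) ≤ M := fun n => hIleM _ (hgT n)
  have hIgM : Tendsto (fun n => Ifun (g n)) atTop (𝓝 M) := by
    refine tendsto_of_tendsto_of_tendsto_of_le_of_le (g := fun n : ℕ => M - 1 / (n+1))
      (h := fun _ => M) ?_ tendsto_const_nhds (fun n => (hIg_lt n).le) hIg_le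
    have := tendsto_one_div_add_atTop_nhds_zero_nat (𝕜 := ℝ)
    have h2 : Tendsto (fun n : ℕ => M - 1 / (n+1)) atTop (𝓝 (M - 0)) :=
      tendsto_const_nhds.sub this
    simpa using h2
  -- pointwise supremum
  set G : Ω → ℝ := fun ω => ⨆ n, g n ω with hGdef
  have hGm : AEStronglyMeasurable G P := by
    have : AEMeasurable G P := by
      exact AEMeasurable.iSup (fun n => (g n).aemeasurable)
    exact this.aestronglyMeasurable
  set s0 : Ω →ₘ[P] ℝ := AEEqFun.mk G hGm with hs0
  have hs0G : s0 =ᵐ[P] G := AEEqFun.coeFn_mk _ _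
  -- good set where everything behaves
  have hgood : ∀ᵐ ω ∂P, Monotone (fun n => g n ω) ∧ (∀ n, g n ω ≤ b ω) ∧
      Tendsto (fun n => g n ω) atTop (𝓝 (G ω)) ∧ (∀ n, g n ω ≤ G ω) := by
    have h1 : ∀ᵐ ω ∂P, ∀ n, g n ω ≤ g (n+1) ω := by
      rw [MeasureTheory.ae_all_iff]; exact fun n => myle_ae (hgmono (Nat.le_succ n))
    have h2 : ∀ᵐ ω ∂P, ∀ n, g n ω ≤ b ω := by
      rw [MeasureTheory.ae_all_iff]; exact fun n => myle_ae (hgb n)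
    filter_upwards [h1, h2] with ω h1 h2
    have hmono : Monotone fun n => g n ω := monotone_nat_of_le_succ h1
    have hbdd2 : BddAbove (Set.range fun n => g n ω) := ⟨b ω, by rintro _ ⟨n, rfl⟩; exact h2 n⟩
    exact ⟨hmono, h2, tendsto_atTop_ciSup hmono hbdd2, fun n => le_ciSup hbdd2 n⟩
  -- ∫ arctan G = M
  have hintG : Integrable (fun ω => Real.arctan (G ω)) P := by
    refine ⟨Real.continuous_arctan.comp_aestronglyMeasurable hGm, ?_⟩
    refine HasFiniteIntegral.of_bounded (C := Real.pi / 2) (ae_of_all _ fun ω => ?_)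
    rw [Real.norm_eq_abs, abs_le]
    exact ⟨(Real.neg_pi_div_two_lt_arctan _).le, (Real.arctan_lt_pi_div_two _).le⟩
  have htendIG : Tendsto (fun n => Ifun (g n)) atTop (𝓝 (∫ ω, Real.arctan (G ω) ∂P)) := by
    refine tendsto_integral_of_dominated_convergence (fun _ => Real.pi / 2)
      (fun n => (intg (g n)).1) (integrable_const _) (fun n => ae_of_all _ fun ω => ?_) ?_
    · rw [Real.norm_eq_abs, abs_le]
      exact ⟨(Real.neg_pi_div_two_lt_arctan _).le, (Real.arctan_lt_pi_div_two _).le⟩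
    · filter_upwards [hgood] with ω hω
      exact (Real.continuous_arctan.continuousAt.tendsto).comp hω.2.2.1
  have hIGM : ∫ ω, Real.arctan (G ω) ∂P = M := tendsto_nhds_unique htendIG hIgM
  refine ⟨s0, ?_, ?_⟩
  · -- upper bound
    intro s hs
    have hsT : ∀ n, g n ⊔ s ∈ T := fun n => supClosed_supClosure (hgT n) (subset_supClosure hs)
    have hsup_ae : ∀ᵐ ω ∂P, ∀ n, (g n ⊔ s) ω = max (g n ω) (s ω) := by
      rw [MeasureTheory.ae_all_iff]; exact fun n => AEEqFun.coeFn_sup (g n) s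
    have hintGs : Integrable (fun ω => Real.arctan (max (G ω) (s ω))) P := by
      refine ⟨Real.continuous_arctan.comp_aestronglyMeasurable
        (hGm.sup s.aestronglyMeasurable), ?_⟩
      refine HasFiniteIntegral.of_bounded (C := Real.pi / 2) (ae_of_all _ fun ω => ?_)
      rw [Real.norm_eq_abs, abs_le]
      exact ⟨(Real.neg_pi_div_two_lt_arctan _).le, (Real.arctan_lt_pi_div_two _).le⟩
    have htend2 : Tendsto (fun n => Ifun (g n ⊔ s)) atTop
        (𝓝 (∫ ω, Real.arctan (max (G ω) (s ω)) ∂P)) := by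
      refine tendsto_integral_of_dominated_convergence (fun _ => Real.pi / 2)
        (fun n => (intg (g n ⊔ s)).1) (integrable_const _) (fun n => ae_of_all _ fun ω => ?_) ?_
      · rw [Real.norm_eq_abs, abs_le]
        exact ⟨(Real.neg_pi_div_two_lt_arctan _).le, (Real.arctan_lt_pi_div_two _).le⟩
      · filter_upwards [hgood, hsup_ae] with ω hω hsup
        have : Tendsto (fun n => max (g n ω) (s ω)) atTop (𝓝 (max (G ω) (s ω))) :=
          hω.2.2.1.max tendsto_const_nhds
        refine ((Real.continuous_arctan.continuousAt.tendsto).comp this).congr fun n => ?_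
        simp only [Function.comp]
        rw [hsup n]
    have hle2 : ∫ ω, Real.arctan (max (G ω) (s ω)) ∂P ≤ M :=
      le_of_tendsto htend2 (Eventually.of_forall fun n => hIleM _ (hsT n))
    -- equality a.e.
    have hdiff : (fun ω => Real.arctan (max (G ω) (s ω)) - Real.arctan (G ω)) =ᵐ[P] 0 := by
      rw [← integral_eq_zero_iff_of_nonneg_ae]
      · refine le_antisymm ?_ ?_
        · rw [integral_sub hintGs hintG, hIGM]; linarith
        · refine integral_nonneg fun ω => ?_
          simp only [Pi.zero_apply, sub_nonneg]
          exact Real.arctan_strictMono.monotone (le_max_left _ _)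
      · exact ae_of_all _ fun ω => by
          simp only [Pi.zero_apply, sub_nonneg]
          exact Real.arctan_strictMono.monotone (le_max_left _ _)
      · exact hintGs.sub hintG
    refine AEEqFun.coeFn_le.1 ?_
    filter_upwards [hdiff, hs0G] with ω hω hω2
    simp only [Pi.zero_apply, sub_eq_zero] at hω
    have := Real.arctan_injective hω
    rw [hω2]
    calc s ω ≤ max (G ω) (s ω) := le_max_right _ _
      _ = G ω := this
  · -- least upper bound
    intro c hc
    have hcT : c ∈ upperBounds T := by rw [hT, upperBounds_supClosure]; exact hc
    have hgc : ∀ n, g n ≤ c := fun n => hcT (hgT n)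
    refine AEEqFun.coeFn_le.1 ?_
    have hall : ∀ᵐ ω ∂P, ∀ n, g n ω ≤ c ω := by
      rw [MeasureTheory.ae_all_iff]; exact fun n => myle_ae (hgc n)
    filter_upwards [hall, hgood, hs0G] with ω h1 h2 h3
    rw [h3]
    exact ciSup_le h1

end Completeness

open MeasureTheory RNM in
/-- Helly theorem in `RN` modules, necessity (Theorem 3.2, "⇒"): if the random linear
equations `fᵢ(x) = ξᵢ` admit, for each `ε ∈ L⁰₊₊`, a solution of random norm `≤ β + ε`,
then `|Σ λₖ ξₖ| ≤ β ‖Σ λₖ fₖ‖*` for all `λ₁,…,λₙ ∈ L⁰(𝓕,ℂ)`. -/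
theorem helly_necessity {Ω : Type} [MeasurableSpace Ω] {P : Measure Ω}
    [IsProbabilityMeasure P] {E : Type*} [AddCommGroup E] [Module (Ω →ₘ[P] ℂ) E]
    (nrm : E → Ω →ₘ[P] ℝ) (hnrm : IsRNNorm nrm) (n : ℕ)
    (f : Fin n → (E →ₗ[Ω →ₘ[P] ℂ] (Ω →ₘ[P] ℂ))) (hf : ∀ i, f i ∈ rdual nrm)
    (ξ : Fin n → Ω →ₘ[P] ℂ) (β : Ω →ₘ[P] ℝ) (hβ : 0 ≤ β)
    (hsol : ∀ ε : Ω →ₘ[P] ℝ, L0pos ε →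
      ∃ x : E, (∀ i, f i x = ξ i) ∧ nrm x ≤ β + ε) :
    ∀ lam : Fin n → Ω →ₘ[P] ℂ,
      L0abs (∑ k, lam k * ξ k) ≤ β * dnorm nrm (∑ k, lam k • f k) := by
  classical
  intro lam
  set g : E →ₗ[Ω →ₘ[P] ℂ] (Ω →ₘ[P] ℂ) := ∑ k, lam k • f k with hgdef
  set Z : Ω →ₘ[P] ℂ := ∑ k, lam k * ξ k with hZdef
  obtain ⟨η, hη0, hη⟩ : g ∈ rdual nrm :=
    Submodule.sum_mem _ fun k _ => Submodule.smul_mem _ _ (hf k)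
  have h01 : (0 : Ω →ₘ[P] ℝ) ≤ 1 := by
    apply le_of_ae
    filter_upwards [zero_ae (P := P) ℝ, one_ae (P := P) ℝ] with ω h0 h1
    rw [h0, h1]; norm_num
  have hSne : {a | ∃ y : E, nrm y ≤ 1 ∧ a = L0abs (g y)}.Nonempty :=
    ⟨L0abs (g 0), 0, by rw [(hnrm.eq_zero_iff 0).2 rfl]; exact h01, rfl⟩
  have hub : η ∈ upperBounds {a | ∃ y : E, nrm y ≤ 1 ∧ a = L0abs (g y)} := by
    rintro a ⟨y, hy1, rfl⟩
    refine le_trans (hη y) ?_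
    apply le_of_ae
    filter_upwards [mul_ae η (nrm y), myle_ae hy1, myle_ae hη0, one_ae (P := P) ℝ,
      zero_ae (P := P) ℝ] with ω h1 h2 h3 h4 h5
    rw [h1]; rw [h5] at h3; rw [h4] at h2
    nlinarith
  have hex : ∃ s, IsLUB {a | ∃ y : E, nrm y ≤ 1 ∧ a = L0abs (g y)} s :=
    exists_isLUB_of_bddAE hSne hub
  have hlub : IsLUB {a | ∃ y : E, nrm y ≤ 1 ∧ a = L0abs (g y)} (dnorm nrm g) := by
    rw [dnorm, dif_pos hex]
    exact hex.choose_spec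
  set D : Ω →ₘ[P] ℝ := dnorm nrm g with hDdef
  have hD0 : (0 : Ω →ₘ[P] ℝ) ≤ D := by
    have h0mem : L0abs (g 0) ≤ D :=
      hlub.1 ⟨0, by rw [(hnrm.eq_zero_iff 0).2 rfl]; exact h01, rfl⟩
    refine le_trans (le_of_ae ?_) h0mem
    have hg0 : g (0 : E) = 0 := map_zero g
    filter_upwards [zero_ae (P := P) ℝ, L0abs_ae (g 0), zero_ae (P := P) ℂ] with ω h1 h2 h3
    rw [h1, h2, hg0, h3]
    simp
  -- the per-ε estimate
  have hclaim : ∀ ε : Ω →ₘ[P] ℝ, L0pos ε →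
      ∀ᵐ ω ∂P, (L0abs Z) ω ≤ (β ω + 2 * ε ω) * D ω := by
    intro ε hε
    obtain ⟨x, hx, hxn⟩ := hsol ε hε
    have hxZ : g x = Z := by
      rw [hgdef, hZdef, LinearMap.sum_apply]
      exact Finset.sum_congr rfl fun k _ => by rw [LinearMap.smul_apply, smul_eq_mul, hx k]
    have hmeas : AEStronglyMeasurable (fun ω => ((nrm x + ε) ω)⁻¹) P :=
      ((nrm x + ε).aemeasurable.inv).aestronglyMeasurable
    set ζ : Ω →ₘ[P] ℝ := AEEqFun.mk _ hmeas with hζdef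
    have hζ : ∀ᵐ ω ∂P, ζ ω = ((nrm x + ε) ω)⁻¹ := AEEqFun.coeFn_mk _ hmeas
    have hofc : ∀ᵐ ω ∂P, (ofRealC ζ) ω = Complex.ofReal (ζ ω) := AEEqFun.coeFn_comp _ _ ζ
    have hNpos : ∀ᵐ ω ∂P, 0 ≤ nrm x ω := by
      filter_upwards [myle_ae (hnrm.nonneg x), zero_ae (P := P) ℝ] with ω h1 h2
      rw [h2] at h1; simpa using h1
    have habs : ∀ᵐ ω ∂P, (L0abs (ofRealC ζ)) ω = |ζ ω| := by
      filter_upwards [L0abs_ae (ofRealC ζ), hofc] with ω h1 h2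
      rw [h1, h2, Complex.norm_real, Real.norm_eq_abs]
    have hny1 : nrm (ofRealC ζ • x) ≤ 1 := by
      rw [hnrm.smul_eq]
      apply le_of_ae
      filter_upwards [mul_ae (L0abs (ofRealC ζ)) (nrm x), habs, hζ,
        add_ae (nrm x) ε, one_ae (P := P) ℝ, hNpos, hε] with ω h1 h2 h3 h4 h5 h6 h7
      rw [h1, h2, h3, h4, h5, abs_of_nonneg (inv_nonneg.2 (by linarith))]
      rw [inv_mul_le_iff₀ (by linarith)]
      linarith
    have hmemD : L0abs (g (ofRealC ζ • x)) ≤ D := hlub.1 ⟨_, hny1, rfl⟩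
    have hgy : g (ofRealC ζ • x) = ofRealC ζ * Z := by
      rw [_root_.map_smul, smul_eq_mul, hxZ]
    rw [hgy] at hmemD
    filter_upwards [myle_ae hmemD, L0abs_ae (ofRealC ζ * Z), mul_ae (ofRealC ζ) Z, hofc, hζ,
      add_ae (nrm x) ε, myle_ae hxn, add_ae β ε, hNpos, hε, L0abs_ae Z,
      myle_ae hD0, zero_ae (P := P) ℝ] with ω h1 h2 h3 h4 h5 h6 h7 h8 h9 h10 h11 h12 h13
    rw [h2, h3, h4, h5, h6] at h1
    rw [h8] at h7
    rw [h13] at h12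
    rw [h11]
    rw [norm_mul, Complex.norm_real, Real.norm_eq_abs, abs_of_nonneg (inv_nonneg.2 (by linarith : (0:ℝ) ≤ nrm x ω + ε ω)),
      inv_mul_le_iff₀ (by linarith)] at h1
    refine h1.trans (mul_le_mul_of_nonneg_right (by linarith) h12)
  -- pass to the limit along ε = 1/(m+1)
  have hconst : ∀ m : ℕ, L0pos (AEEqFun.const Ω (μ := P) (1 / (m + 1) : ℝ)) := by
    intro m
    filter_upwards [AEEqFun.coeFn_const (α := Ω) (μ := P) (1 / (m + 1) : ℝ)] with ω h
    rw [h]; simp only [Function.const_apply]; positivity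
  have hall : ∀ᵐ ω ∂P, ∀ m : ℕ, (L0abs Z) ω ≤ (β ω + 2 * (1 / (m + 1))) * D ω := by
    rw [MeasureTheory.ae_all_iff]
    intro m
    filter_upwards [hclaim _ (hconst m),
      AEEqFun.coeFn_const (α := Ω) (μ := P) (1 / (m + 1) : ℝ)] with ω h1 h2
    rw [h2] at h1; simpa using h1
  apply le_of_ae
  filter_upwards [hall, mul_ae β D, myle_ae hD0, zero_ae (P := P) ℝ] with ω h1 h2 h3 h4
  rw [h2]
  rw [h4] at h3
  have htend : Filter.Tendsto (fun m : ℕ => (β ω + 2 * (1 / (m + 1))) * D ω)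
      Filter.atTop (nhds ((β ω + 2 * 0) * D ω)) :=
    ((tendsto_const_nhds.add (tendsto_one_div_add_atTop_nhds_zero_nat.const_mul 2)).mul
      tendsto_const_nhds)
  simp only [mul_zero, add_zero] at htend
  exact ge_of_tendsto htend (Filter.Eventually.of_forall h1)
end
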